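/- arXiv:1608.01908 — 8 statements merged into one kernel-verified Lean document; each statement's English description precedes it below -/
import Mathlib

section
/- Let x=(x₀,x₁), y=(y₀,y₁), z=(z₀,z₁) be vectors in ℂ², and write x₊=(x₀,x₁), x₋=(x₀,−x₁), and similarly y₊,y₋,z₊,z₋. Put ξ = x⊗y⊗z, ξ₀ = x₊⊗y₊⊗z₊, ξ₁ = x₊⊗y₋⊗z₋, ξ₂ = x₋⊗y₊⊗z₋, ξ₃ = x₋⊗y₋⊗z₊ (Kronecker products in ℂ⁸). Then the X-part of the rank-one matrix |ξ⟩⟨ξ| equals (1/4)·(|ξ₀⟩⟨ξ₀| + |ξ₁⟩⟨ξ₁| + |ξ₂⟩⟨ξ₂| + |ξ₃⟩⟨ξ₃|). -/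
open scoped ComplexOrder Matrix

noncomputable section

/-- Kronecker product of three vectors in `ℂ²`, indices in lexicographic order. -/
def kron3 (x y z : Fin 2 → ℂ) : Fin 8 → ℂ := fun i =>
  x ⟨i.val / 4, by have := i.isLt; omega⟩ *
  y ⟨i.val / 2 % 2, by omega⟩ *
  z ⟨i.val % 2, by omega⟩

/-- Kronecker product of three `2×2` matrices, indices in lexicographic order. -/
def kron3M (A B C : Matrix (Fin 2) (Fin 2) ℂ) : Matrix (Fin 8) (Fin 8) ℂ :=
  Matrix.of fun i j =>
    A ⟨i.val / 4, by have := i.isLt; omega⟩ ⟨j.val / 4, by have := j.isLt; omega⟩ *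
    B ⟨i.val / 2 % 2, by omega⟩ ⟨j.val / 2 % 2, by omega⟩ *
    C ⟨i.val % 2, by omega⟩ ⟨j.val % 2, by omega⟩

/-- The rank one matrix `|v⟩⟨v|`. -/
def proj (v : Fin 8 → ℂ) : Matrix (Fin 8) (Fin 8) ℂ :=
  Matrix.of fun i j => v i * star (v j)

/-- The X-part of an `8×8` matrix: keep the diagonal and the anti-diagonal, zero elsewhere. -/
def Xpart (ρ : Matrix (Fin 8) (Fin 8) ℂ) : Matrix (Fin 8) (Fin 8) ℂ :=
  Matrix.of fun i j => if i = j ∨ i.val + j.val = 7 then ρ i j else 0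

/-- A three qubit state: positive semidefinite `8×8` matrix of trace 1. -/
def IsState (ρ : Matrix (Fin 8) (Fin 8) ℂ) : Prop :=
  ρ.PosSemidef ∧ ρ.trace = 1

/-- Unit vector in `ℂ²`. -/
def unitVec (v : Fin 2 → ℂ) : Prop := ∑ j, star (v j) * v j = 1

/-- (Full) separability of a three qubit state: finite convex combination of
pure product states. -/
def IsSep (ρ : Matrix (Fin 8) (Fin 8) ℂ) : Prop :=
  ∃ (n : ℕ) (p : Fin n → ℝ) (x y z : Fin n → Fin 2 → ℂ),
    (∀ k, 0 ≤ p k) ∧ (∑ k, p k = 1) ∧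
    (∀ k, unitVec (x k)) ∧ (∀ k, unitVec (y k)) ∧ (∀ k, unitVec (z k)) ∧
    ρ = ∑ k, (p k : ℂ) • proj (kron3 (x k) (y k) (z k))

/-- The pairing `⟨ϱ, W⟩ = Tr (ϱ Wᵀ)`. -/
def pairing (ρ W : Matrix (Fin 8) (Fin 8) ℂ) : ℂ := (ρ * Wᵀ).trace

/-- Entanglement witness: self-adjoint, not positive semidefinite, and
nonnegative pairing against all separable states. -/
def IsEW (W : Matrix (Fin 8) (Fin 8) ℂ) : Prop :=
  W.IsHermitian ∧ ¬ W.PosSemidef ∧ ∀ ρ, IsSep ρ → 0 ≤ pairing ρ W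

/-- The X-shaped matrix `X(a,b,c)`. -/
def XMat (a b : Fin 4 → ℝ) (c : Fin 4 → ℂ) : Matrix (Fin 8) (Fin 8) ℂ :=
  Matrix.of fun i j =>
    if i = j then
      (if h : i.val < 4 then ((a ⟨i.val, h⟩ : ℝ) : ℂ)
       else ((b ⟨7 - i.val, by have := i.isLt; omega⟩ : ℝ) : ℂ))
    else if h7 : i.val + j.val = 7 then
      (if h : i.val < 4 then c ⟨i.val, h⟩
       else star (c ⟨j.val, by have := i.isLt; omega⟩))
    else 0

/-- The quantity `A(s,t)`. -/
def Afun (s t : Fin 4 → ℝ) : ℝ :=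
  ⨅ r : Set.Ioi (0 : ℝ),
    (Real.sqrt ((s 0 * (r : ℝ)⁻¹ + t 3 * (r : ℝ)) * (s 3 * (r : ℝ)⁻¹ + t 0 * (r : ℝ))) +
     Real.sqrt ((s 1 * (r : ℝ)⁻¹ + t 2 * (r : ℝ)) * (s 2 * (r : ℝ)⁻¹ + t 1 * (r : ℝ))))

/-- The quantity `B(u)`. -/
def Bfun (u : Fin 4 → ℂ) : ℝ :=
  ⨆ θ : ℝ,
    (‖u 0 * Complex.exp ((θ : ℂ) * Complex.I) + star (u 3)‖ +
     ‖u 1 * Complex.exp ((θ : ℂ) * Complex.I) + star (u 2)‖)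

/-- The quantity `C(z)`. -/
def Cfun (z : Fin 4 → ℂ) : ℝ :=
  ⨆ p : ℝ × ℝ × ℝ,
    |(z 0 * Complex.exp (((p.1 + p.2.1 + p.2.2 : ℝ) : ℂ) * Complex.I)).re +
     (z 1 * Complex.exp (((p.1 : ℝ) : ℂ) * Complex.I)).re +
     (z 2 * Complex.exp (((p.2.1 : ℝ) : ℂ) * Complex.I)).re +
     (z 3 * Complex.exp (((p.2.2 : ℝ) : ℂ) * Complex.I)).re|

/-- The quantity `L(ϱ,z)`, where the X-part of `ϱ` is `X(a,b,c)`. -/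
def Lfun (c z : Fin 4 → ℂ) : ℝ :=
  (z 0 * c 0 + z 1 * c 1 + z 2 * c 2 + z 3 * star (c 3)).re

/-- Partial transpose with respect to the first tensor factor. -/
def pt1 (ρ : Matrix (Fin 8) (Fin 8) ℂ) : Matrix (Fin 8) (Fin 8) ℂ :=
  Matrix.of fun i j =>
    ρ ⟨(j.val / 4) * 4 + i.val % 4, by have := i.isLt; have := j.isLt; omega⟩
      ⟨(i.val / 4) * 4 + j.val % 4, by have := i.isLt; have := j.isLt; omega⟩

/-- Partial transpose with respect to the second tensor factor. -/
def pt2 (ρ : Matrix (Fin 8) (Fin 8) ℂ) : Matrix (Fin 8) (Fin 8) ℂ :=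
  Matrix.of fun i j =>
    ρ ⟨(i.val / 4) * 4 + (j.val / 2 % 2) * 2 + i.val % 2,
        by have := i.isLt; have := j.isLt; omega⟩
      ⟨(j.val / 4) * 4 + (i.val / 2 % 2) * 2 + j.val % 2,
        by have := i.isLt; have := j.isLt; omega⟩

/-- Partial transpose with respect to the third tensor factor. -/
def pt3 (ρ : Matrix (Fin 8) (Fin 8) ℂ) : Matrix (Fin 8) (Fin 8) ℂ :=
  Matrix.of fun i j =>
    ρ ⟨(i.val / 4) * 4 + (i.val / 2 % 2) * 2 + j.val % 2,
        by have := i.isLt; have := j.isLt; omega⟩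
      ⟨(j.val / 4) * 4 + (j.val / 2 % 2) * 2 + i.val % 2,
        by have := i.isLt; have := j.isLt; omega⟩

/-- A three qubit state has positive partial transposes. -/
def IsPPT (ρ : Matrix (Fin 8) (Fin 8) ℂ) : Prop :=
  (pt1 ρ).PosSemidef ∧ (pt2 ρ).PosSemidef ∧ (pt3 ρ).PosSemidef

/-- `λ₅` from the anti-diagonal of a GHZ diagonal state. -/
def lam5 (c : Fin 4 → ℝ) : ℝ := 2 * (c 0 + c 1 + c 2 + c 3)
/-- `λ₆`. -/
def lam6 (c : Fin 4 → ℝ) : ℝ := 2 * (-c 0 - c 1 + c 2 + c 3)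
/-- `λ₇`. -/
def lam7 (c : Fin 4 → ℝ) : ℝ := 2 * (-c 0 + c 1 - c 2 + c 3)
/-- `λ₈`. -/
def lam8 (c : Fin 4 → ℝ) : ℝ := 2 * (-c 0 + c 1 + c 2 - c 3)

/-- `t₁`. -/
def tc1 (c : Fin 4 → ℝ) : ℝ :=
  c 0 * (-(c 0)^2 + (c 1)^2 + (c 2)^2 + (c 3)^2) - 2 * c 1 * c 2 * c 3
/-- `t₂`. -/
def tc2 (c : Fin 4 → ℝ) : ℝ :=
  c 1 * ((c 0)^2 - (c 1)^2 + (c 2)^2 + (c 3)^2) - 2 * c 0 * c 2 * c 3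
/-- `t₃`. -/
def tc3 (c : Fin 4 → ℝ) : ℝ :=
  c 2 * ((c 0)^2 + (c 1)^2 - (c 2)^2 + (c 3)^2) - 2 * c 0 * c 1 * c 3
/-- `t₄`. -/
def tc4 (c : Fin 4 → ℝ) : ℝ :=
  c 3 * ((c 0)^2 + (c 1)^2 + (c 2)^2 - (c 3)^2) - 2 * c 0 * c 1 * c 2

set_option maxHeartbeats 2000000 in
/-- the X-part of a pure product state is the average of four
pure product states obtained by sign flips. -/
theorem stmt0 (x y z xm ym zm : Fin 2 → ℂ)
    (hxm : xm = ![x 0, -x 1]) (hym : ym = ![y 0, -y 1]) (hzm : zm = ![z 0, -z 1]) :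
    Xpart (proj (kron3 x y z)) =
      (1 / 4 : ℂ) •
        (proj (kron3 x y z) + proj (kron3 x ym zm) +
         proj (kron3 xm y zm) + proj (kron3 xm ym z)) := by
  subst hxm hym hzm
  ext i j
  fin_cases i <;> fin_cases j <;>
    (simp only [Xpart, proj, kron3, Matrix.of_apply, Matrix.smul_apply, Matrix.add_apply,
       Fin.mk.injEq, Fin.val_mk, Fin.mk_zero, Fin.mk_one, Fin.isValue];
     norm_num [Matrix.cons_val_zero, Matrix.cons_val_one, Matrix.head_cons, Fin.ext_iff];
     try ring)

end
end

section
/- The X-part of every separable three qubit state is again a separable three qubit state. -/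
open scoped ComplexOrder Matrix

noncomputable section

/-- Flip the sign of the second coordinate. -/
def fl (v : Fin 2 → ℂ) : Fin 2 → ℂ := fun i => if i = 0 then v 0 else -(v 1)

lemma fl_apply (v : Fin 2 → ℂ) (i : Fin 2) : fl v i = (-1:ℂ)^(i:ℕ) * v i := by
  fin_cases i <;> simp [fl]

lemma unitVec_fl {v : Fin 2 → ℂ} (h : unitVec v) : unitVec (fl v) := by
  unfold unitVec at h ⊢
  simp [Fin.sum_univ_two, fl] at h ⊢
  linear_combination h

def bb1 (i : Fin 8) : ℕ := i.val / 4
def bb2 (i : Fin 8) : ℕ := i.val / 2 % 2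
def bb3 (i : Fin 8) : ℕ := i.val % 2

lemma kron3_fl23 (x y z : Fin 2 → ℂ) (i : Fin 8) :
    kron3 x (fl y) (fl z) i = (-1:ℂ)^(bb2 i + bb3 i) * kron3 x y z i := by
  simp [kron3, fl_apply, bb2, bb3, pow_add]; ring

lemma kron3_fl13 (x y z : Fin 2 → ℂ) (i : Fin 8) :
    kron3 (fl x) y (fl z) i = (-1:ℂ)^(bb1 i + bb3 i) * kron3 x y z i := by
  simp [kron3, fl_apply, bb1, bb3, pow_add]; ring

lemma kron3_fl12 (x y z : Fin 2 → ℂ) (i : Fin 8) :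
    kron3 (fl x) (fl y) z i = (-1:ℂ)^(bb1 i + bb2 i) * kron3 x y z i := by
  simp [kron3, fl_apply, bb1, bb2, pow_add]; ring

lemma signsum : ∀ i j : Fin 8,
    (1 + (-1:ℤ)^(bb2 i + bb3 i + (bb2 j + bb3 j)) + (-1:ℤ)^(bb1 i + bb3 i + (bb1 j + bb3 j))
      + (-1:ℤ)^(bb1 i + bb2 i + (bb1 j + bb2 j))) =
    if i = j ∨ i.val + j.val = 7 then 4 else 0 := by decide

lemma key (x y z : Fin 2 → ℂ) :
    Xpart (proj (kron3 x y z)) = (4:ℂ)⁻¹ • (proj (kron3 x y z) +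
      proj (kron3 x (fl y) (fl z)) + proj (kron3 (fl x) y (fl z)) +
      proj (kron3 (fl x) (fl y) z)) := by
  ext i j
  have e := congrArg (Int.cast : ℤ → ℂ) (signsum i j)
  push_cast at e
  simp only [pow_add] at e
  simp only [Xpart, proj, Matrix.of_apply, Matrix.add_apply, Matrix.smul_apply,
    smul_eq_mul, kron3_fl23, kron3_fl13, kron3_fl12, star_mul', star_pow, star_neg,
    star_one]
  split_ifs with hc
  · rw [if_pos hc] at e
    linear_combination -(4:ℂ)⁻¹ * (kron3 x y z i * star (kron3 x y z j)) * e
  · rw [if_neg hc] at e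
    linear_combination -(4:ℂ)⁻¹ * (kron3 x y z i * star (kron3 x y z j)) * e

/-- vector flips indexed by `Fin 4`. -/
def flX (m : Fin 4) (v : Fin 2 → ℂ) : Fin 2 → ℂ := if m.val = 2 ∨ m.val = 3 then fl v else v
def flY (m : Fin 4) (v : Fin 2 → ℂ) : Fin 2 → ℂ := if m.val = 1 ∨ m.val = 3 then fl v else v
def flZ (m : Fin 4) (v : Fin 2 → ℂ) : Fin 2 → ℂ := if m.val = 1 ∨ m.val = 2 then fl v else v

lemma key4 (x y z : Fin 2 → ℂ) :
    Xpart (proj (kron3 x y z)) =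
      ∑ m : Fin 4, (4:ℂ)⁻¹ • proj (kron3 (flX m x) (flY m y) (flZ m z)) := by
  rw [key, Fin.sum_univ_four]
  have h0x : flX 0 x = x := if_neg (by decide)
  have h0y : flY 0 y = y := if_neg (by decide)
  have h0z : flZ 0 z = z := if_neg (by decide)
  have h1x : flX 1 x = x := if_neg (by decide)
  have h1y : flY 1 y = fl y := if_pos (by decide)
  have h1z : flZ 1 z = fl z := if_pos (by decide)
  have h2x : flX 2 x = fl x := if_pos (by decide)
  have h2y : flY 2 y = y := if_neg (by decide)
  have h2z : flZ 2 z = fl z := if_pos (by decide)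
  have h3x : flX 3 x = fl x := if_pos (by decide)
  have h3y : flY 3 y = fl y := if_pos (by decide)
  have h3z : flZ 3 z = z := if_neg (by decide)
  rw [h0x, h0y, h0z, h1x, h1y, h1z, h2x, h2y, h2z, h3x, h3y, h3z]
  module

lemma Xpart_sum {α : Type*} (s : Finset α) (f : α → Matrix (Fin 8) (Fin 8) ℂ) :
    Xpart (∑ k ∈ s, f k) = ∑ k ∈ s, Xpart (f k) := by
  ext i j
  simp only [Xpart, Matrix.of_apply, Matrix.sum_apply]
  split_ifs <;> simp

lemma Xpart_smul (c : ℂ) (A : Matrix (Fin 8) (Fin 8) ℂ) :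
    Xpart (c • A) = c • Xpart A := by
  ext i j
  simp only [Xpart, Matrix.of_apply, Matrix.smul_apply, smul_eq_mul]
  split_ifs <;> simp

lemma proj_posSemidef (v : Fin 8 → ℂ) : (proj v).PosSemidef := by
  refine Matrix.posSemidef_iff_dotProduct_mulVec.mpr ⟨?_, ?_⟩
  · ext i j
    simp [proj, Matrix.conjTranspose_apply, mul_comm]
  · intro w
    have : star w ⬝ᵥ (proj v) *ᵥ w
        = star (∑ j, star (v j) * w j) * (∑ j, star (v j) * w j) := by
      simp [dotProduct, Matrix.mulVec, proj, Finset.mul_sum, Finset.sum_mul,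
        star_sum]
      rw [Finset.sum_comm]
      congr 1; ext i; congr 1; ext j; ring
    rw [this]
    exact star_mul_self_nonneg _

lemma smul_posSemidef {c : ℝ} (hc : 0 ≤ c) {A : Matrix (Fin 8) (Fin 8) ℂ}
    (hA : A.PosSemidef) : ((c : ℂ) • A).PosSemidef := by
  refine Matrix.posSemidef_iff_dotProduct_mulVec.mpr ⟨?_, ?_⟩
  · have : ((c:ℂ) • A)ᴴ = (c:ℂ) • A := by
      rw [Matrix.conjTranspose_smul, hA.1]
      congr 1
      simp [Complex.star_def]
    exact this
  · intro w
    rw [Matrix.smul_mulVec, dotProduct_smul, smul_eq_mul]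
    exact mul_nonneg (by exact_mod_cast hc) (hA.dotProduct_mulVec_nonneg w)

lemma isSep_posSemidef {σ : Matrix (Fin 8) (Fin 8) ℂ} (h : IsSep σ) : σ.PosSemidef := by
  obtain ⟨n, p, x, y, z, hp0, -, -, -, -, hrep⟩ := h
  rw [hrep]
  refine Finset.sum_induction _ _ (fun a b ha hb => ha.add hb) Matrix.PosSemidef.zero ?_
  intro k _
  exact smul_posSemidef (hp0 k) (proj_posSemidef _)

/-- the X-part of a separable three qubit state is again a
separable three qubit state. -/
theorem stmt1 (ρ : Matrix (Fin 8) (Fin 8) ℂ) (hstate : IsState ρ) (hsep : IsSep ρ) :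
    IsState (Xpart ρ) ∧ IsSep (Xpart ρ) := by

  obtain ⟨hpsd, htr⟩ := hstate
  obtain ⟨n, p, x, y, z, hp0, hp1, hx, hy, hz, hrep⟩ := hsep
  have hXrep : Xpart ρ = ∑ k, ∑ m : Fin 4,
      ((p k / 4 : ℝ) : ℂ) • proj (kron3 (flX m (x k)) (flY m (y k)) (flZ m (z k))) := by
    rw [hrep, Xpart_sum]
    refine Finset.sum_congr rfl fun k _ => ?_
    rw [Xpart_smul, key4, Finset.smul_sum]
    refine Finset.sum_congr rfl fun m _ => ?_
    rw [smul_smul]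
    congr 1
    push_cast
    ring
  have hsep' : IsSep (Xpart ρ) := by
    refine ⟨4 * n,
      fun j => p (finProdFinEquiv.symm j).2 / 4,
      fun j => flX (finProdFinEquiv.symm j).1 (x (finProdFinEquiv.symm j).2),
      fun j => flY (finProdFinEquiv.symm j).1 (y (finProdFinEquiv.symm j).2),
      fun j => flZ (finProdFinEquiv.symm j).1 (z (finProdFinEquiv.symm j).2),
      fun j => div_nonneg (hp0 _) (by norm_num), ?_, ?_, ?_, ?_, ?_⟩
    · rw [← Equiv.sum_comp (finProdFinEquiv : Fin 4 × Fin n ≃ Fin (4 * n))]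
      simp only [Equiv.symm_apply_apply]
      rw [Fintype.sum_prod_type, Fin.sum_univ_four]
      rw [← Finset.sum_add_distrib, ← Finset.sum_add_distrib, ← Finset.sum_add_distrib]
      rw [show (1:ℝ) = ∑ k, p k from hp1.symm]
      exact Finset.sum_congr rfl fun k _ => by ring
    · intro j
      simp only [flX]
      split_ifs
      · exact unitVec_fl (hx _)
      · exact hx _
    · intro j
      simp only [flY]
      split_ifs
      · exact unitVec_fl (hy _)
      · exact hy _
    · intro j
      simp only [flZ]
      split_ifs
      · exact unitVec_fl (hz _)
      · exact hz _
    · rw [hXrep, ← Equiv.sum_comp (finProdFinEquiv : Fin 4 × Fin n ≃ Fin (4 * n))]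
      simp only [Equiv.symm_apply_apply]
      rw [Fintype.sum_prod_type, Finset.sum_comm]
  refine ⟨⟨isSep_posSemidef hsep', ?_⟩, hsep'⟩
  rw [← htr]
  unfold Matrix.trace
  refine Finset.sum_congr rfl fun i _ => ?_
  simp [Matrix.diag, Xpart]


end
end

section
/- Let W be a three qubit entanglement witness and let W_X be its X-part. If W_X is not positive semidefinite, then W_X is also an entanglement witness. -/
open scoped ComplexOrder Matrix

noncomputable section

/-- Signs for the four twirling operations. -/
def eSgn (g : Fin 4) (m : Fin 3) : ℂ :=
  if g = 0 then 1
  else if g = 1 then (if m = 2 then 1 else -1)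
  else if g = 2 then (if m = 1 then 1 else -1)
  else (if m = 0 then 1 else -1)

lemma eSgn_pm (g : Fin 4) (m : Fin 3) : eSgn g m = 1 ∨ eSgn g m = -1 := by
  fin_cases g <;> fin_cases m <;> simp [eSgn]

lemma eSgn_star (g : Fin 4) (m : Fin 3) : star (eSgn g m) = eSgn g m := by
  rcases eSgn_pm g m with h | h <;> rw [h] <;> simp

/-- The diagonal sign of the twirl `g` at position `i`. -/
def sg (g : Fin 4) (i : Fin 8) : ℂ :=
  eSgn g 0 ^ (i.val / 4) * eSgn g 1 ^ (i.val / 2 % 2) * eSgn g 2 ^ (i.val % 2)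

lemma sg_star (g : Fin 4) (i : Fin 8) : star (sg g i) = sg g i := by
  unfold sg
  rw [star_mul, star_mul, star_pow, star_pow, star_pow,
    eSgn_star, eSgn_star, eSgn_star]
  ring

/-- Integer version of `sg`. -/
def sgZ (g : Fin 4) (i : Fin 8) : ℤ :=
  if g = 0 then 1
  else if g = 1 then (-1) ^ (i.val / 4 + i.val / 2 % 2)
  else if g = 2 then (-1) ^ (i.val / 4 + i.val % 2)
  else (-1) ^ (i.val / 2 % 2 + i.val % 2)

lemma sg_eq (g : Fin 4) (i : Fin 8) : sg g i = ((sgZ g i : ℤ) : ℂ) := by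
  fin_cases g <;> simp [sg, sgZ, eSgn, pow_add] <;> push_cast <;> ring

lemma sgZ_sum (i j : Fin 8) :
    (∑ g : Fin 4, sgZ g i * sgZ g j)
      = if i = j ∨ i.val + j.val = 7 then 4 else 0 := by
  revert i j; decide

lemma sg_sum (i j : Fin 8) :
    (∑ g : Fin 4, sg g i * sg g j)
      = if i = j ∨ i.val + j.val = 7 then 4 else 0 := by
  have : (∑ g : Fin 4, sg g i * sg g j)
      = (((∑ g : Fin 4, sgZ g i * sgZ g j : ℤ)) : ℂ) := by
    push_cast
    exact Finset.sum_congr rfl fun g _ => by rw [sg_eq, sg_eq]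
  rw [this, sgZ_sum]
  split <;> norm_num

/-- Conjugation of a matrix by the `g`-th diagonal sign matrix. -/
def twirl (g : Fin 4) (M : Matrix (Fin 8) (Fin 8) ℂ) : Matrix (Fin 8) (Fin 8) ℂ :=
  Matrix.of fun i j => sg g i * sg g j * M i j

lemma Xpart_eq (W : Matrix (Fin 8) (Fin 8) ℂ) :
    Xpart W = (4⁻¹ : ℂ) • ∑ g : Fin 4, twirl g W := by
  ext i j
  simp only [Xpart, Matrix.of_apply, Matrix.smul_apply, Matrix.sum_apply,
    twirl, smul_eq_mul]
  rw [show (∑ g : Fin 4, sg g i * sg g j * W i j)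
      = (∑ g : Fin 4, sg g i * sg g j) * W i j from (Finset.sum_mul _ _ _).symm,
    sg_sum]
  split <;> simp <;> ring

lemma pairing_eq (ρ W : Matrix (Fin 8) (Fin 8) ℂ) :
    pairing ρ W = ∑ i, ∑ j, ρ i j * W i j := by
  simp [pairing, Matrix.trace, Matrix.mul_apply, Matrix.diag]

lemma pairing_twirl (g : Fin 4) (ρ W : Matrix (Fin 8) (Fin 8) ℂ) :
    pairing ρ (twirl g W) = pairing (twirl g ρ) W := by
  simp only [pairing_eq, twirl, Matrix.of_apply]
  exact Finset.sum_congr rfl fun i _ => Finset.sum_congr rfl fun j _ => by ring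

lemma pairing_smul (c : ℂ) (ρ W : Matrix (Fin 8) (Fin 8) ℂ) :
    pairing ρ (c • W) = c * pairing ρ W := by
  simp only [pairing_eq, Matrix.smul_apply, smul_eq_mul, Finset.mul_sum]
  exact Finset.sum_congr rfl fun i _ => Finset.sum_congr rfl fun j _ => by ring

lemma pairing_sum (ρ : Matrix (Fin 8) (Fin 8) ℂ) (f : Fin 4 → Matrix (Fin 8) (Fin 8) ℂ) :
    pairing ρ (∑ g, f g) = ∑ g, pairing ρ (f g) := by
  calc pairing ρ (∑ g, f g)
      = ∑ i, ∑ j, ∑ g, ρ i j * f g i j := by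
        simp [pairing_eq, Matrix.sum_apply, Finset.mul_sum]
    _ = ∑ i, ∑ g, ∑ j, ρ i j * f g i j :=
        Finset.sum_congr rfl fun i _ => Finset.sum_comm
    _ = ∑ g, ∑ i, ∑ j, ρ i j * f g i j := Finset.sum_comm
    _ = ∑ g, pairing ρ (f g) := by simp [pairing_eq]

lemma unit_twist (ε : ℂ) (hε : ε = 1 ∨ ε = -1) (v : Fin 2 → ℂ) (hv : unitVec v) :
    unitVec (fun j => ε ^ j.val * v j) := by
  have hεε : star ε * ε = 1 := by rcases hε with h | h <;> subst h <;> simp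
  unfold unitVec at hv ⊢
  calc (∑ j : Fin 2, star (ε ^ (j : Fin 2).val * v j) * (ε ^ (j : Fin 2).val * v j))
      = ∑ j : Fin 2, (star ε * ε) ^ (j : Fin 2).val * (star (v j) * v j) := by
        refine Finset.sum_congr rfl fun j _ => ?_
        rw [star_mul, star_pow, mul_pow]
        ring
    _ = 1 := by
        rw [hεε]
        simpa using hv

lemma kron3_twist (g : Fin 4) (x y z : Fin 2 → ℂ) (i : Fin 8) :
    kron3 (fun j => eSgn g 0 ^ j.val * x j) (fun j => eSgn g 1 ^ j.val * y j)
      (fun j => eSgn g 2 ^ j.val * z j) i = sg g i * kron3 x y z i := by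
  simp only [kron3, sg]
  ring

lemma twirl_proj (g : Fin 4) (x y z : Fin 2 → ℂ) :
    twirl g (proj (kron3 x y z))
      = proj (kron3 (fun j => eSgn g 0 ^ j.val * x j) (fun j => eSgn g 1 ^ j.val * y j)
          (fun j => eSgn g 2 ^ j.val * z j)) := by
  ext i j
  simp only [twirl, proj, Matrix.of_apply, kron3_twist, star_mul, sg_star]
  ring

lemma twirl_sep (g : Fin 4) (ρ : Matrix (Fin 8) (Fin 8) ℂ) (hρ : IsSep ρ) :
    IsSep (twirl g ρ) := by
  obtain ⟨n, p, x, y, z, hp, hps, hx, hy, hz, hρeq⟩ := hρ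
  refine ⟨n, p, fun k j => eSgn g 0 ^ j.val * x k j, fun k j => eSgn g 1 ^ j.val * y k j,
    fun k j => eSgn g 2 ^ j.val * z k j, hp, hps,
    fun k => unit_twist _ (eSgn_pm g 0) _ (hx k),
    fun k => unit_twist _ (eSgn_pm g 1) _ (hy k),
    fun k => unit_twist _ (eSgn_pm g 2) _ (hz k), ?_⟩
  subst hρeq
  ext i j
  simp only [twirl, Matrix.of_apply, Matrix.sum_apply, Matrix.smul_apply,
    smul_eq_mul, Finset.mul_sum]
  refine Finset.sum_congr rfl fun k _ => ?_
  rw [← twirl_proj]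
  simp only [twirl, Matrix.of_apply]
  ring

lemma Xpart_herm (W : Matrix (Fin 8) (Fin 8) ℂ) (hW : W.IsHermitian) :
    (Xpart W).IsHermitian := by
  ext i j
  simp only [Matrix.conjTranspose_apply, Xpart, Matrix.of_apply]
  by_cases hc : i = j ∨ i.val + j.val = 7
  · have hc' : j = i ∨ j.val + i.val = 7 := by
      rcases hc with hc | hc
      · exact Or.inl hc.symm
      · exact Or.inr (by omega)
    rw [if_pos hc', if_pos hc]
    exact hW.apply i j
  · have hc' : ¬ (j = i ∨ j.val + i.val = 7) := by
      intro hcon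
      rcases hcon with hcon | hcon
      · exact hc (Or.inl hcon.symm)
      · exact hc (Or.inr (by omega))
    rw [if_neg hc', if_neg hc, star_zero]

/-- the X-part of a three qubit entanglement witness is again an
entanglement witness, provided it is not positive semidefinite. -/
theorem stmt2 (W : Matrix (Fin 8) (Fin 8) ℂ) (hW : IsEW W)
    (h : ¬ (Xpart W).PosSemidef) : IsEW (Xpart W) := by
  obtain ⟨hherm, -, hpair⟩ := hW
  refine ⟨Xpart_herm W hherm, h, fun ρ hρ => ?_⟩
  rw [Xpart_eq W, pairing_smul, pairing_sum]
  have h4 : (0 : ℂ) ≤ 4⁻¹ := by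
    rw [show ((4 : ℂ)⁻¹ = ((4⁻¹ : ℝ) : ℂ)) by push_cast; ring]
    exact_mod_cast (by norm_num : (0:ℝ) ≤ 4⁻¹)
  refine mul_nonneg h4 (Finset.sum_nonneg fun g _ => ?_)
  rw [pairing_twirl]
  exact hpair _ (twirl_sep g ρ hρ)

end
end

section
/- Let s,t ∈ ℝ⁴ have nonnegative entries and u ∈ ℂ⁴, and suppose W = X(s,t,u) is not positive semidefinite. Then W is an entanglement witness if and only if A(s,t) ≥ B(u). -/
open scoped ComplexOrder Matrix

noncomputable section

set_option maxHeartbeats 1000000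

section Aux

open Complex

section Xentries
variable (s t : Fin 4 → ℝ) (u : Fin 4 → ℂ)
@[simp] lemma X00 : XMat s t u 0 0 = ((s 0 : ℝ) : ℂ) := rfl
@[simp] lemma X01 : XMat s t u 0 1 = 0 := rfl
@[simp] lemma X02 : XMat s t u 0 2 = 0 := rfl
@[simp] lemma X03 : XMat s t u 0 3 = 0 := rfl
@[simp] lemma X04 : XMat s t u 0 4 = 0 := rfl
@[simp] lemma X05 : XMat s t u 0 5 = 0 := rfl
@[simp] lemma X06 : XMat s t u 0 6 = 0 := rfl
@[simp] lemma X07 : XMat s t u 0 7 = u 0 := rfl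
@[simp] lemma X10 : XMat s t u 1 0 = 0 := rfl
@[simp] lemma X11 : XMat s t u 1 1 = ((s 1 : ℝ) : ℂ) := rfl
@[simp] lemma X12 : XMat s t u 1 2 = 0 := rfl
@[simp] lemma X13 : XMat s t u 1 3 = 0 := rfl
@[simp] lemma X14 : XMat s t u 1 4 = 0 := rfl
@[simp] lemma X15 : XMat s t u 1 5 = 0 := rfl
@[simp] lemma X16 : XMat s t u 1 6 = u 1 := rfl
@[simp] lemma X17 : XMat s t u 1 7 = 0 := rfl
@[simp] lemma X20 : XMat s t u 2 0 = 0 := rfl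
@[simp] lemma X21 : XMat s t u 2 1 = 0 := rfl
@[simp] lemma X22 : XMat s t u 2 2 = ((s 2 : ℝ) : ℂ) := rfl
@[simp] lemma X23 : XMat s t u 2 3 = 0 := rfl
@[simp] lemma X24 : XMat s t u 2 4 = 0 := rfl
@[simp] lemma X25 : XMat s t u 2 5 = u 2 := rfl
@[simp] lemma X26 : XMat s t u 2 6 = 0 := rfl
@[simp] lemma X27 : XMat s t u 2 7 = 0 := rfl
@[simp] lemma X30 : XMat s t u 3 0 = 0 := rfl
@[simp] lemma X31 : XMat s t u 3 1 = 0 := rfl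
@[simp] lemma X32 : XMat s t u 3 2 = 0 := rfl
@[simp] lemma X33 : XMat s t u 3 3 = ((s 3 : ℝ) : ℂ) := rfl
@[simp] lemma X34 : XMat s t u 3 4 = u 3 := rfl
@[simp] lemma X35 : XMat s t u 3 5 = 0 := rfl
@[simp] lemma X36 : XMat s t u 3 6 = 0 := rfl
@[simp] lemma X37 : XMat s t u 3 7 = 0 := rfl
@[simp] lemma X40 : XMat s t u 4 0 = 0 := rfl
@[simp] lemma X41 : XMat s t u 4 1 = 0 := rfl
@[simp] lemma X42 : XMat s t u 4 2 = 0 := rfl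
@[simp] lemma X43 : XMat s t u 4 3 = star (u 3) := rfl
@[simp] lemma X44 : XMat s t u 4 4 = ((t 3 : ℝ) : ℂ) := rfl
@[simp] lemma X45 : XMat s t u 4 5 = 0 := rfl
@[simp] lemma X46 : XMat s t u 4 6 = 0 := rfl
@[simp] lemma X47 : XMat s t u 4 7 = 0 := rfl
@[simp] lemma X50 : XMat s t u 5 0 = 0 := rfl
@[simp] lemma X51 : XMat s t u 5 1 = 0 := rfl
@[simp] lemma X52 : XMat s t u 5 2 = star (u 2) := rfl
@[simp] lemma X53 : XMat s t u 5 3 = 0 := rfl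
@[simp] lemma X54 : XMat s t u 5 4 = 0 := rfl
@[simp] lemma X55 : XMat s t u 5 5 = ((t 2 : ℝ) : ℂ) := rfl
@[simp] lemma X56 : XMat s t u 5 6 = 0 := rfl
@[simp] lemma X57 : XMat s t u 5 7 = 0 := rfl
@[simp] lemma X60 : XMat s t u 6 0 = 0 := rfl
@[simp] lemma X61 : XMat s t u 6 1 = star (u 1) := rfl
@[simp] lemma X62 : XMat s t u 6 2 = 0 := rfl
@[simp] lemma X63 : XMat s t u 6 3 = 0 := rfl
@[simp] lemma X64 : XMat s t u 6 4 = 0 := rfl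
@[simp] lemma X65 : XMat s t u 6 5 = 0 := rfl
@[simp] lemma X66 : XMat s t u 6 6 = ((t 1 : ℝ) : ℂ) := rfl
@[simp] lemma X67 : XMat s t u 6 7 = 0 := rfl
@[simp] lemma X70 : XMat s t u 7 0 = star (u 0) := rfl
@[simp] lemma X71 : XMat s t u 7 1 = 0 := rfl
@[simp] lemma X72 : XMat s t u 7 2 = 0 := rfl
@[simp] lemma X73 : XMat s t u 7 3 = 0 := rfl
@[simp] lemma X74 : XMat s t u 7 4 = 0 := rfl
@[simp] lemma X75 : XMat s t u 7 5 = 0 := rfl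
@[simp] lemma X76 : XMat s t u 7 6 = 0 := rfl
@[simp] lemma X77 : XMat s t u 7 7 = ((t 0 : ℝ) : ℂ) := rfl
end Xentries

section Kron
variable (x y z : Fin 2 → ℂ)
@[simp] lemma k0 : kron3 x y z 0 = x 0 * y 0 * z 0 := rfl
@[simp] lemma k1 : kron3 x y z 1 = x 0 * y 0 * z 1 := rfl
@[simp] lemma k2 : kron3 x y z 2 = x 0 * y 1 * z 0 := rfl
@[simp] lemma k3 : kron3 x y z 3 = x 0 * y 1 * z 1 := rfl
@[simp] lemma k4 : kron3 x y z 4 = x 1 * y 0 * z 0 := rfl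
@[simp] lemma k5 : kron3 x y z 5 = x 1 * y 0 * z 1 := rfl
@[simp] lemma k6 : kron3 x y z 6 = x 1 * y 1 * z 0 := rfl
@[simp] lemma k7 : kron3 x y z 7 = x 1 * y 1 * z 1 := rfl
end Kron

lemma pairing_proj (v : Fin 8 → ℂ) (W : Matrix (Fin 8) (Fin 8) ℂ) :
    pairing (proj v) W = ∑ i, ∑ j, v i * star (v j) * W i j := by
  simp only [pairing, Matrix.trace, Matrix.diag, Matrix.mul_apply, proj,
    Matrix.transpose_apply, Matrix.of_apply]

/-- The diagonal part of the pairing against a product vector. -/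
def Drv (s t : Fin 4 → ℝ) (v : Fin 8 → ℂ) : ℝ :=
  s 0 * Complex.normSq (v 0) + s 1 * Complex.normSq (v 1) +
  s 2 * Complex.normSq (v 2) + s 3 * Complex.normSq (v 3) +
  t 3 * Complex.normSq (v 4) + t 2 * Complex.normSq (v 5) +
  t 1 * Complex.normSq (v 6) + t 0 * Complex.normSq (v 7)

/-- Half the off-diagonal part of the pairing against a product vector. -/
def Wv (u : Fin 4 → ℂ) (v : Fin 8 → ℂ) : ℂ :=
  u 0 * (v 0 * star (v 7)) + u 1 * (v 1 * star (v 6)) +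
  u 2 * (v 2 * star (v 5)) + u 3 * (v 3 * star (v 4))

lemma pairing_product (s t : Fin 4 → ℝ) (u : Fin 4 → ℂ) (v : Fin 8 → ℂ) :
    pairing (proj v) (XMat s t u) = ((Drv s t v + 2 * (Wv u v).re : ℝ) : ℂ) := by
  rw [pairing_proj]
  simp only [Fin.sum_univ_eight, X00,X01,X02,X03,X04,X05,X06,X07,X10,X11,X12,X13,X14,X15,X16,X17,
    X20,X21,X22,X23,X24,X25,X26,X27,X30,X31,X32,X33,X34,X35,X36,X37,X40,X41,X42,X43,X44,X45,X46,X47,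
    X50,X51,X52,X53,X54,X55,X56,X57,X60,X61,X62,X63,X64,X65,X66,X67,X70,X71,X72,X73,X74,X75,X76,X77]
  have hre : ((2 * (Wv u v).re : ℝ) : ℂ) = Wv u v + star (Wv u v) := by
    rw [Complex.star_def, Complex.add_conj]
  have hns : ∀ w : ℂ, ((Complex.normSq w : ℝ) : ℂ) = w * star w := by
    intro w; rw [Complex.star_def, Complex.mul_conj]
  simp only [Drv]
  push_cast [hre, hns]
  simp only [Wv, Complex.star_def, map_add, map_mul, Complex.conj_conj]
  ring

end Aux

section Aux2
open Complex

/-- The function whose supremum is `Bfun`. -/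
def bFn (u : Fin 4 → ℂ) (θ : ℝ) : ℝ :=
  ‖u 0 * Complex.exp ((θ : ℂ) * Complex.I) + star (u 3)‖ +
  ‖u 1 * Complex.exp ((θ : ℂ) * Complex.I) + star (u 2)‖

lemma Bfun_eq (u : Fin 4 → ℂ) : Bfun u = ⨆ θ : ℝ, bFn u θ := rfl

/-- The function whose infimum is `Afun`. -/
def fFn (s t : Fin 4 → ℝ) (r : ℝ) : ℝ :=
  Real.sqrt ((s 0 * r⁻¹ + t 3 * r) * (s 3 * r⁻¹ + t 0 * r)) +
  Real.sqrt ((s 1 * r⁻¹ + t 2 * r) * (s 2 * r⁻¹ + t 1 * r))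

lemma Afun_eq (s t : Fin 4 → ℝ) : Afun s t = ⨅ r : Set.Ioi (0:ℝ), fFn s t r := rfl

lemma bFn_bound (u : Fin 4 → ℂ) (θ : ℝ) :
    bFn u θ ≤ ‖u 0‖ + ‖u 3‖ + ‖u 1‖ + ‖u 2‖ := by
  have h1 : ‖u 0 * Complex.exp ((θ : ℂ) * Complex.I) + star (u 3)‖ ≤
      ‖u 0‖ + ‖u 3‖ := by
    refine (norm_add_le _ _).trans ?_
    rw [norm_mul, Complex.norm_exp_ofReal_mul_I, mul_one, Complex.star_def, Complex.norm_conj]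
  have h2 : ‖u 1 * Complex.exp ((θ : ℂ) * Complex.I) + star (u 2)‖ ≤
      ‖u 1‖ + ‖u 2‖ := by
    refine (norm_add_le _ _).trans ?_
    rw [norm_mul, Complex.norm_exp_ofReal_mul_I, mul_one, Complex.star_def, Complex.norm_conj]
  unfold bFn; linarith

lemma bFn_bddAbove (u : Fin 4 → ℂ) : BddAbove (Set.range (bFn u)) := by
  refine ⟨‖u 0‖ + ‖u 3‖ + ‖u 1‖ + ‖u 2‖, ?_⟩
  rintro _ ⟨θ, rfl⟩; exact bFn_bound u θ

lemma bFn_le_Bfun (u : Fin 4 → ℂ) (θ : ℝ) : bFn u θ ≤ Bfun u := by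
  rw [Bfun_eq]; exact le_ciSup (bFn_bddAbove u) θ

lemma Bfun_le (u : Fin 4 → ℂ) (c : ℝ) (h : ∀ θ, bFn u θ ≤ c) : Bfun u ≤ c := by
  rw [Bfun_eq]; exact ciSup_le h

lemma fFn_nonneg (s t : Fin 4 → ℝ) (r : ℝ) : 0 ≤ fFn s t r := by
  unfold fFn; positivity

lemma Afun_le (s t : Fin 4 → ℝ) {r : ℝ} (hr : 0 < r) : Afun s t ≤ fFn s t r := by
  rw [Afun_eq]
  have hbdd : BddBelow (Set.range fun q : Set.Ioi (0:ℝ) => fFn s t q) := by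
    refine ⟨0, ?_⟩; rintro _ ⟨q, rfl⟩; exact fFn_nonneg s t q
  exact ciInf_le hbdd ⟨r, hr⟩

lemma le_Afun (s t : Fin 4 → ℝ) (c : ℝ) (h : ∀ r : ℝ, 0 < r → c ≤ fFn s t r) :
    c ≤ Afun s t := by
  rw [Afun_eq]; exact le_ciInf fun r => h r r.2

lemma re_conj_mul (a b : ℂ) : (a * (starRingEnd ℂ) b).re = ((starRingEnd ℂ) a * b).re := by
  rw [← Complex.conj_re ((starRingEnd ℂ) a * b), map_mul, Complex.conj_conj]

lemma exp_mul_conj_exp (φ : ℝ) :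
    Complex.exp ((φ:ℂ) * Complex.I) * (starRingEnd ℂ) (Complex.exp ((φ:ℂ) * Complex.I)) = 1 := by
  rw [← Complex.exp_conj]
  rw [← Complex.exp_add]
  have : (φ:ℂ) * Complex.I + (starRingEnd ℂ) ((φ:ℂ) * Complex.I) = 0 := by
    simp [Complex.conj_I, Complex.conj_ofReal]
  rw [this, Complex.exp_zero]

/-- The key bound on the off-diagonal part. -/
lemma abs_S_le (u : Fin 4 → ℂ) (β γ : ℂ) :
    ‖u 0 * (β * γ) + u 1 * (β * (starRingEnd ℂ) γ) +
      u 2 * ((starRingEnd ℂ) β * γ) + u 3 * ((starRingEnd ℂ) β * (starRingEnd ℂ) γ)‖ ≤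
    ‖β‖ * ‖γ‖ * Bfun u := by
  set S := u 0 * (β * γ) + u 1 * (β * (starRingEnd ℂ) γ) +
      u 2 * ((starRingEnd ℂ) β * γ) + u 3 * ((starRingEnd ℂ) β * (starRingEnd ℂ) γ) with hS
  set φ := S.arg with hφ
  set E := Complex.exp ((-φ : ℝ) * Complex.I) with hE
  have hconjE : (starRingEnd ℂ) E = Complex.exp ((φ:ℂ) * Complex.I) := by
    rw [hE, ← Complex.exp_conj]
    congr 1
    simp [Complex.conj_I, Complex.conj_ofReal]
  have hEconjE : E * (starRingEnd ℂ) E = 1 := by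
    rw [hconjE, hE, ← Complex.exp_add]
    push_cast
    ring_nf
    exact Complex.exp_zero
  have hEE : E * E = Complex.exp (((-2*φ : ℝ):ℂ) * Complex.I) := by
    rw [hE, ← Complex.exp_add]
    congr 1
    push_cast
    ring
  have habs : (‖S‖ : ℂ) = S * E := by
    conv_rhs => rw [← Complex.norm_mul_exp_arg_mul_I S]
    rw [mul_assoc, hE, ← Complex.exp_add, ← hφ]
    push_cast
    ring_nf
    rw [Complex.exp_zero, mul_one]
  have hre : ‖S‖ = (S * E).re := by rw [← habs, Complex.ofReal_re]
  have hsplit : (S * E).re = ((u 0 * E + (starRingEnd ℂ) (u 3 * E)) * (β * γ)).re +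
      ((u 1 * E + (starRingEnd ℂ) (u 2 * E)) * (β * (starRingEnd ℂ) γ)).re := by
    have h3 : (u 3 * E * ((starRingEnd ℂ) β * (starRingEnd ℂ) γ)).re
        = ((starRingEnd ℂ) (u 3 * E) * (β * γ)).re := by
      rw [← re_conj_mul (u 3 * E) (β * γ), map_mul]
    have h2 : (u 2 * E * ((starRingEnd ℂ) β * γ)).re
        = ((starRingEnd ℂ) (u 2 * E) * (β * (starRingEnd ℂ) γ)).re := by
      rw [← re_conj_mul (u 2 * E) (β * (starRingEnd ℂ) γ), map_mul, Complex.conj_conj]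
    have hexp : S * E = u 0 * E * (β * γ) + u 1 * E * (β * (starRingEnd ℂ) γ) +
        u 2 * E * ((starRingEnd ℂ) β * γ) + u 3 * E * ((starRingEnd ℂ) β * (starRingEnd ℂ) γ) := by
      rw [hS]; ring
    rw [hexp]
    simp only [add_mul, Complex.add_re]
    rw [h3, h2]
    ring
  have key : ∀ a b : ℂ, ‖a * E + (starRingEnd ℂ) (b * E)‖ =
      ‖a * Complex.exp (((-2*φ : ℝ):ℂ) * Complex.I) + (starRingEnd ℂ) b‖ := by
    intro a b
    have heq : a * E + (starRingEnd ℂ) (b * E) =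
        (starRingEnd ℂ) E * (a * (E * E) + (starRingEnd ℂ) b) := by
      have h1 : (starRingEnd ℂ) E * (a * (E * E)) = a * E * (E * (starRingEnd ℂ) E) := by ring
      rw [map_mul, mul_add, h1, hEconjE, mul_one]
      ring
    rw [heq, norm_mul, Complex.norm_conj, hE, Complex.norm_exp_ofReal_mul_I, one_mul, ← hE, hEE]
  have hb1 : ((u 0 * E + (starRingEnd ℂ) (u 3 * E)) * (β * γ)).re ≤
      ‖u 0 * Complex.exp (((-2*φ : ℝ):ℂ) * Complex.I) + (starRingEnd ℂ) (u 3)‖ *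
        (‖β‖ * ‖γ‖) := by
    refine (Complex.re_le_norm _).trans (le_of_eq ?_)
    rw [norm_mul, key, norm_mul]
  have hb2 : ((u 1 * E + (starRingEnd ℂ) (u 2 * E)) * (β * (starRingEnd ℂ) γ)).re ≤
      ‖u 1 * Complex.exp (((-2*φ : ℝ):ℂ) * Complex.I) + (starRingEnd ℂ) (u 2)‖ *
        (‖β‖ * ‖γ‖) := by
    refine (Complex.re_le_norm _).trans (le_of_eq ?_)
    rw [norm_mul, key, norm_mul, Complex.norm_conj]
  have hfin : ‖S‖ ≤ bFn u (-2*φ) * (‖β‖ * ‖γ‖) := by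
    rw [hre, hsplit]
    refine (add_le_add hb1 hb2).trans (le_of_eq ?_)
    rw [bFn]
    simp only [Complex.star_def]
    ring
  refine hfin.trans ?_
  rw [mul_comm]
  have h := bFn_le_Bfun u (-2*φ)
  have hnn : 0 ≤ ‖β‖ * ‖γ‖ := by positivity
  exact mul_le_mul_of_nonneg_left h hnn

end Aux2

section Aux3
open Complex

lemma amgm {p q c d : ℝ} (hp : 0 ≤ p) (hq : 0 ≤ q) (hc : 0 ≤ c) (hd : 0 ≤ d) :
    2 * (Real.sqrt (p * q) * Real.sqrt (c * d)) ≤ p * c + q * d := by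
  have h1 : Real.sqrt (p * q) * Real.sqrt (c * d) = Real.sqrt (p * c) * Real.sqrt (q * d) := by
    rw [← Real.sqrt_mul (by positivity), ← Real.sqrt_mul (by positivity)]
    ring_nf
  rw [h1]
  have h2 := two_mul_le_add_sq (Real.sqrt (p * c)) (Real.sqrt (q * d))
  have h3 : Real.sqrt (p * c) ^ 2 = p * c := Real.sq_sqrt (by positivity)
  have h4 : Real.sqrt (q * d) ^ 2 = q * d := Real.sq_sqrt (by positivity)
  nlinarith [h2, h3, h4]

/-- Positivity of the pairing on a single (not necessarily normalised) product vector,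
assuming `Bfun u ≤ Afun s t`. -/
lemma pos_on_products (s t : Fin 4 → ℝ) (u : Fin 4 → ℂ)
    (hs : ∀ i, 0 ≤ s i) (ht : ∀ i, 0 ≤ t i) (hBA : Bfun u ≤ Afun s t)
    (x y z : Fin 2 → ℂ) :
    0 ≤ Drv s t (kron3 x y z) + 2 * (Wv u (kron3 x y z)).re := by
  set a1 := ‖x 0‖; set a2 := ‖x 1‖
  set b1 := ‖y 0‖; set b2 := ‖y 1‖
  set c1 := ‖z 0‖; set c2 := ‖z 1‖
  have hDrv : Drv s t (kron3 x y z) =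
      s 0 * (a1^2 * (b1^2 * c1^2)) + s 1 * (a1^2 * (b1^2 * c2^2)) +
      s 2 * (a1^2 * (b2^2 * c1^2)) + s 3 * (a1^2 * (b2^2 * c2^2)) +
      t 3 * (a2^2 * (b1^2 * c1^2)) + t 2 * (a2^2 * (b1^2 * c2^2)) +
      t 1 * (a2^2 * (b2^2 * c1^2)) + t 0 * (a2^2 * (b2^2 * c2^2)) := by
    simp only [Drv, k0, k1, k2, k3, k4, k5, k6, k7, map_mul, ← Complex.sq_norm]
    ring
  have hWv : Wv u (kron3 x y z) = (x 0 * (starRingEnd ℂ) (x 1)) *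
      (u 0 * ((y 0 * (starRingEnd ℂ) (y 1)) * (z 0 * (starRingEnd ℂ) (z 1))) +
       u 1 * ((y 0 * (starRingEnd ℂ) (y 1)) * (starRingEnd ℂ) (z 0 * (starRingEnd ℂ) (z 1))) +
       u 2 * ((starRingEnd ℂ) (y 0 * (starRingEnd ℂ) (y 1)) * (z 0 * (starRingEnd ℂ) (z 1))) +
       u 3 * ((starRingEnd ℂ) (y 0 * (starRingEnd ℂ) (y 1)) *
              (starRingEnd ℂ) (z 0 * (starRingEnd ℂ) (z 1)))) := by
    simp only [Wv, k0, k1, k2, k3, k4, k5, k6, k7, Complex.star_def, map_mul, Complex.conj_conj]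
    ring
  have habsW : ‖Wv u (kron3 x y z)‖ ≤ (a1*a2) * ((b1*b2) * (c1*c2)) * Bfun u := by
    rw [hWv, norm_mul]
    have h1 : ‖x 0 * (starRingEnd ℂ) (x 1)‖ = a1 * a2 := by
      rw [norm_mul, Complex.norm_conj]
    have h2 := abs_S_le u (y 0 * (starRingEnd ℂ) (y 1)) (z 0 * (starRingEnd ℂ) (z 1))
    have h3 : ‖y 0 * (starRingEnd ℂ) (y 1)‖ = b1 * b2 := by
      rw [norm_mul, Complex.norm_conj]
    have h4 : ‖z 0 * (starRingEnd ℂ) (z 1)‖ = c1 * c2 := by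
      rw [norm_mul, Complex.norm_conj]
    rw [h1]
    rw [h3, h4] at h2
    calc a1 * a2 * ‖_‖ ≤ a1 * a2 * (b1 * b2 * (c1 * c2) * Bfun u) := by
          apply mul_le_mul_of_nonneg_left _ (by positivity)
          exact h2
      _ = a1*a2 * ((b1*b2) * (c1*c2)) * Bfun u := by ring
  by_cases hz : a1 * a2 * (b1 * b2) * (c1 * c2) = 0
  · -- some component vanishes: cross term is zero
    have hW0 : Wv u (kron3 x y z) = 0 := by
      have : ‖Wv u (kron3 x y z)‖ ≤ 0 := by
        refine habsW.trans (le_of_eq ?_)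
        have h00 : a1*a2 * ((b1*b2) * (c1*c2)) = 0 := by rw [← hz]; ring
        rw [h00, zero_mul]
      have h0 : ‖Wv u (kron3 x y z)‖ = 0 :=
        le_antisymm this (norm_nonneg _)
      exact norm_eq_zero.mp h0
    rw [hW0]
    simp only [Complex.zero_re, mul_zero, add_zero]
    rw [hDrv]
    have h0 := hs 0; have h1 := hs 1; have h2 := hs 2; have h3 := hs 3
    have g0 := ht 0; have g1 := ht 1; have g2 := ht 2; have g3 := ht 3
    positivity
  · -- all components nonzero
    have hnz : a1 ≠ 0 ∧ a2 ≠ 0 ∧ b1 ≠ 0 ∧ b2 ≠ 0 ∧ c1 ≠ 0 ∧ c2 ≠ 0 := by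
      refine ⟨?_, ?_, ?_, ?_, ?_, ?_⟩ <;> (intro h; apply hz; rw [h]; ring)
    obtain ⟨ha1, ha2, hb1, hb2, hc1, hc2⟩ := hnz
    have ha1p : 0 < a1 := lt_of_le_of_ne (norm_nonneg _) (Ne.symm ha1)
    have ha2p : 0 < a2 := lt_of_le_of_ne (norm_nonneg _) (Ne.symm ha2)
    have hb1p : 0 < b1 := lt_of_le_of_ne (norm_nonneg _) (Ne.symm hb1)
    have hb2p : 0 < b2 := lt_of_le_of_ne (norm_nonneg _) (Ne.symm hb2)
    have hc1p : 0 < c1 := lt_of_le_of_ne (norm_nonneg _) (Ne.symm hc1)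
    have hc2p : 0 < c2 := lt_of_le_of_ne (norm_nonneg _) (Ne.symm hc2)
    set r := a2 / a1 with hrdef
    have hrpos : 0 < r := div_pos ha2p ha1p
    have hs0 := hs 0; have hs1 := hs 1; have hs2 := hs 2; have hs3 := hs 3
    have ht0 := ht 0; have ht1 := ht 1; have ht2 := ht 2; have ht3 := ht 3
    set P1 := s 0 * r⁻¹ + t 3 * r with hP1def
    set P2 := s 3 * r⁻¹ + t 0 * r with hP2def
    set P3 := s 1 * r⁻¹ + t 2 * r with hP3def
    set P4 := s 2 * r⁻¹ + t 1 * r with hP4def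
    have hP1 : 0 ≤ P1 := by rw [hP1def]; positivity
    have hP2 : 0 ≤ P2 := by rw [hP2def]; positivity
    have hP3 : 0 ≤ P3 := by rw [hP3def]; positivity
    have hP4 : 0 ≤ P4 := by rw [hP4def]; positivity
    set K := a1 * a2 * ((b1 * b2) * (c1 * c2)) with hKdef
    have hKpos : 0 < K := by rw [hKdef]; positivity
    set C1 := a1 * a2 * (b1^2 * c1^2) with hC1def
    set C2 := a1 * a2 * (b2^2 * c2^2) with hC2def
    set C3 := a1 * a2 * (b1^2 * c2^2) with hC3def
    set C4 := a1 * a2 * (b2^2 * c1^2) with hC4def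
    have hC1 : 0 ≤ C1 := by rw [hC1def]; positivity
    have hC2 : 0 ≤ C2 := by rw [hC2def]; positivity
    have hC3 : 0 ≤ C3 := by rw [hC3def]; positivity
    have hC4 : 0 ≤ C4 := by rw [hC4def]; positivity
    have hD2 : Drv s t (kron3 x y z) = P1 * C1 + P2 * C2 + P3 * C3 + P4 * C4 := by
      rw [hDrv, hP1def, hP2def, hP3def, hP4def, hC1def, hC2def, hC3def, hC4def, hrdef]
      field_simp
      ring
    have hC12 : Real.sqrt (C1 * C2) = K := by
      have h : C1 * C2 = K^2 := by rw [hC1def, hC2def, hKdef]; ring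
      rw [h, Real.sqrt_sq hKpos.le]
    have hC34 : Real.sqrt (C3 * C4) = K := by
      have h : C3 * C4 = K^2 := by rw [hC3def, hC4def, hKdef]; ring
      rw [h, Real.sqrt_sq hKpos.le]
    have g1 : 2 * (Real.sqrt (P1 * P2) * K) ≤ P1 * C1 + P2 * C2 := by
      have := amgm hP1 hP2 hC1 hC2
      rwa [hC12] at this
    have g2 : 2 * (Real.sqrt (P3 * P4) * K) ≤ P3 * C3 + P4 * C4 := by
      have := amgm hP3 hP4 hC3 hC4
      rwa [hC34] at this
    have hfr : fFn s t r = Real.sqrt (P1 * P2) + Real.sqrt (P3 * P4) := rfl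
    have hDge : 2 * K * fFn s t r ≤ Drv s t (kron3 x y z) := by
      rw [hD2, hfr]; linarith
    have hcross : -(K * Bfun u) ≤ (Wv u (kron3 x y z)).re := by
      have h1 := (abs_le.mp (Complex.abs_re_le_norm (Wv u (kron3 x y z)))).1
      have h2 : ‖Wv u (kron3 x y z)‖ ≤ K * Bfun u := by
        refine habsW.trans (le_of_eq ?_)
        rw [hKdef]
      linarith
    have hfA : Afun s t ≤ fFn s t r := Afun_le s t hrpos
    have hBf : K * Bfun u ≤ K * fFn s t r :=
      mul_le_mul_of_nonneg_left (hBA.trans hfA) hKpos.le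
    linarith

end Aux3

section Aux4
open Complex

lemma XMat_isHermitian (s t : Fin 4 → ℝ) (u : Fin 4 → ℂ) : (XMat s t u).IsHermitian := by
  rw [Matrix.IsHermitian]
  ext i j
  rw [Matrix.conjTranspose_apply]
  fin_cases i <;> fin_cases j <;>
    simp [X00,X01,X02,X03,X04,X05,X06,X07,X10,X11,X12,X13,X14,X15,X16,X17,
      X20,X21,X22,X23,X24,X25,X26,X27,X30,X31,X32,X33,X34,X35,X36,X37,
      X40,X41,X42,X43,X44,X45,X46,X47,X50,X51,X52,X53,X54,X55,X56,X57,
      X60,X61,X62,X63,X64,X65,X66,X67,X70,X71,X72,X73,X74,X75,X76,X77,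
      Complex.star_def, Complex.conj_ofReal]

lemma pairing_sum_s4 {n : ℕ} (c : Fin n → ℝ) (ρ : Fin n → Matrix (Fin 8) (Fin 8) ℂ)
    (W : Matrix (Fin 8) (Fin 8) ℂ) :
    pairing (∑ k, (c k : ℂ) • ρ k) W = ∑ k, (c k : ℂ) * pairing (ρ k) W := by
  simp only [pairing, Matrix.sum_mul, Matrix.trace_sum, Matrix.smul_mul, Matrix.trace_smul,
    smul_eq_mul]

lemma product_isSep (x y z : Fin 2 → ℂ) (hx : unitVec x) (hy : unitVec y) (hz : unitVec z) :
    IsSep (proj (kron3 x y z)) := by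
  refine ⟨1, fun _ => 1, fun _ => x, fun _ => y, fun _ => z,
    fun _ => zero_le_one, by simp, fun _ => hx, fun _ => hy, fun _ => hz, ?_⟩
  simp

lemma sep_pairing_nonneg (s t : Fin 4 → ℝ) (u : Fin 4 → ℂ)
    (hs : ∀ i, 0 ≤ s i) (ht : ∀ i, 0 ≤ t i) (hBA : Bfun u ≤ Afun s t)
    (ρ : Matrix (Fin 8) (Fin 8) ℂ) (hρ : IsSep ρ) : 0 ≤ pairing ρ (XMat s t u) := by
  obtain ⟨n, p, x, y, z, hp, -, -, -, -, rfl⟩ := hρ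
  rw [pairing_sum_s4]
  have heq : ∀ k : Fin n, (p k : ℂ) * pairing (proj (kron3 (x k) (y k) (z k))) (XMat s t u)
      = ((p k * (Drv s t (kron3 (x k) (y k) (z k)) +
          2 * (Wv u (kron3 (x k) (y k) (z k))).re) : ℝ) : ℂ) := by
    intro k
    rw [pairing_product]
    push_cast
    ring
  calc (0:ℂ) = ((0:ℝ):ℂ) := by norm_num
    _ ≤ ((∑ k, p k * (Drv s t (kron3 (x k) (y k) (z k)) +
          2 * (Wv u (kron3 (x k) (y k) (z k))).re) : ℝ) : ℂ) := by
        rw [Complex.real_le_real]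
        refine Finset.sum_nonneg fun k _ => mul_nonneg (hp k) ?_
        exact pos_on_products s t u hs ht hBA (x k) (y k) (z k)
    _ = ∑ k, (p k : ℂ) * pairing (proj (kron3 (x k) (y k) (z k))) (XMat s t u) := by
        rw [Complex.ofReal_sum]
        exact Finset.sum_congr rfl fun k _ => (heq k).symm

end Aux4

section Aux5
open Complex

lemma sqrt_mul_sqrt_eq {x y : ℝ} {X Y : ℝ} (hx : 0 < x) (hy : 0 < y)
    (hX : x^2 = X) (hY : y^2 = Y) : x*y = Real.sqrt (X*Y) := by
  rw [← hX, ← hY]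
  rw [show x^2*y^2 = (x*y)^2 by ring, Real.sqrt_sq (by positivity)]

lemma keyS (P1 P2 P3 P4 : ℝ) (h1 : 0 ≤ P1) (h2 : 0 ≤ P2) (h3 : 0 ≤ P3) (h4 : 0 ≤ P4)
    {ε : ℝ} (hε : 0 < ε) :
    ∃ Q M : ℝ, 0 < Q ∧ Q < 1 ∧ 0 < M ∧ M < 1 ∧
      P1*(Q*M) + P2*((1-Q)*(1-M)) + P3*(Q*(1-M)) + P4*((1-Q)*M) ≤
        2 * Real.sqrt (Q*M*((1-Q)*(1-M))) * (Real.sqrt (P1*P2) + Real.sqrt (P3*P4) + ε) := by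
  obtain ⟨δ, hδpos, hδ1, hδ2⟩ : ∃ δ:ℝ, 0 < δ ∧ δ ≤ 1 ∧ δ*(4*(P1+P2+P3+P4+1)) ≤ ε^2 := by
    refine ⟨min 1 (ε^2/(4*(P1+P2+P3+P4+1))), lt_min one_pos (by positivity), min_le_left _ _, ?_⟩
    have h := min_le_right 1 (ε^2/(4*(P1+P2+P3+P4+1)))
    have hS : (0:ℝ) < 4*(P1+P2+P3+P4+1) := by linarith
    calc min 1 (ε^2/(4*(P1+P2+P3+P4+1))) * (4*(P1+P2+P3+P4+1))
        ≤ (ε^2/(4*(P1+P2+P3+P4+1))) * (4*(P1+P2+P3+P4+1)) :=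
          mul_le_mul_of_nonneg_right h hS.le
      _ = ε^2 := by field_simp
  obtain ⟨a, hap, ha2⟩ : ∃ a:ℝ, 0 < a ∧ a^2 = P1+δ :=
    ⟨Real.sqrt (P1+δ), Real.sqrt_pos.mpr (by linarith), Real.sq_sqrt (by linarith)⟩
  obtain ⟨b, hbp, hb2⟩ : ∃ b:ℝ, 0 < b ∧ b^2 = P2+δ :=
    ⟨Real.sqrt (P2+δ), Real.sqrt_pos.mpr (by linarith), Real.sq_sqrt (by linarith)⟩
  obtain ⟨c, hcp, hc2⟩ : ∃ c:ℝ, 0 < c ∧ c^2 = P3+δ :=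
    ⟨Real.sqrt (P3+δ), Real.sqrt_pos.mpr (by linarith), Real.sq_sqrt (by linarith)⟩
  obtain ⟨d, hdp, hd2⟩ : ∃ d:ℝ, 0 < d ∧ d^2 = P4+δ :=
    ⟨Real.sqrt (P4+δ), Real.sqrt_pos.mpr (by linarith), Real.sq_sqrt (by linarith)⟩
  have hD1p : 0 < a*c + b*d := by positivity
  have hD2p : 0 < a*d + b*c := by positivity
  refine ⟨b*d/(a*c+b*d), b*c/(a*d+b*c), by positivity, ?_, by positivity, ?_, ?_⟩
  · rw [div_lt_one hD1p]; nlinarith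
  · rw [div_lt_one hD2p]; nlinarith
  have hQc : 1 - b*d/(a*c+b*d) = a*c/(a*c+b*d) := by field_simp; ring
  have hMc : 1 - b*c/(a*d+b*c) = a*d/(a*d+b*c) := by field_simp; ring
  rw [hQc, hMc]
  have hsqrtQM : Real.sqrt (b*d/(a*c+b*d) * (b*c/(a*d+b*c)) *
      (a*c/(a*c+b*d) * (a*d/(a*d+b*c)))) = a*b*c*d/((a*c+b*d)*(a*d+b*c)) := by
    have harg : b*d/(a*c+b*d) * (b*c/(a*d+b*c)) * (a*c/(a*c+b*d) * (a*d/(a*d+b*c)))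
        = (a*b*c*d/((a*c+b*d)*(a*d+b*c)))^2 := by
      field_simp
    rw [harg, Real.sqrt_sq (by positivity)]
  rw [hsqrtQM]
  have hiden : (P1+δ)*(b*d/(a*c+b*d) * (b*c/(a*d+b*c)))
      + (P2+δ)*(a*c/(a*c+b*d) * (a*d/(a*d+b*c)))
      + (P3+δ)*(b*d/(a*c+b*d) * (a*d/(a*d+b*c)))
      + (P4+δ)*(a*c/(a*c+b*d) * (b*c/(a*d+b*c)))
      = 2 * (a*b*c*d/((a*c+b*d)*(a*d+b*c))) * (a*b + c*d) := by
    rw [← ha2, ← hb2, ← hc2, ← hd2]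
    field_simp
    ring
  have hmono : P1*(b*d/(a*c+b*d) * (b*c/(a*d+b*c)))
      + P2*(a*c/(a*c+b*d) * (a*d/(a*d+b*c)))
      + P3*(b*d/(a*c+b*d) * (a*d/(a*d+b*c)))
      + P4*(a*c/(a*c+b*d) * (b*c/(a*d+b*c)))
      ≤ (P1+δ)*(b*d/(a*c+b*d) * (b*c/(a*d+b*c)))
      + (P2+δ)*(a*c/(a*c+b*d) * (a*d/(a*d+b*c)))
      + (P3+δ)*(b*d/(a*c+b*d) * (a*d/(a*d+b*c)))
      + (P4+δ)*(a*c/(a*c+b*d) * (b*c/(a*d+b*c))) := by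
    have c1 : (0:ℝ) ≤ b*d/(a*c+b*d) * (b*c/(a*d+b*c)) := by positivity
    have c2 : (0:ℝ) ≤ a*c/(a*c+b*d) * (a*d/(a*d+b*c)) := by positivity
    have c3 : (0:ℝ) ≤ b*d/(a*c+b*d) * (a*d/(a*d+b*c)) := by positivity
    have c4 : (0:ℝ) ≤ a*c/(a*c+b*d) * (b*c/(a*d+b*c)) := by positivity
    have e1 : P1 ≤ P1 + δ := by linarith
    have e2 : P2 ≤ P2 + δ := by linarith
    have e3 : P3 ≤ P3 + δ := by linarith
    have e4 : P4 ≤ P4 + δ := by linarith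
    exact add_le_add (add_le_add (add_le_add (mul_le_mul_of_nonneg_right e1 c1)
      (mul_le_mul_of_nonneg_right e2 c2)) (mul_le_mul_of_nonneg_right e3 c3))
      (mul_le_mul_of_nonneg_right e4 c4)
  have hd_small1 : δ*(P1+P2) + δ^2 ≤ ε^2/4 := by nlinarith
  have hd_small2 : δ*(P3+P4) + δ^2 ≤ ε^2/4 := by nlinarith
  have hab : a*b ≤ Real.sqrt (P1*P2) + ε/2 := by
    rw [sqrt_mul_sqrt_eq hap hbp ha2 hb2]
    have hsq : Real.sqrt (P1*P2)^2 = P1*P2 := Real.sq_sqrt (by positivity)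
    have hsn : 0 ≤ Real.sqrt (P1*P2) := Real.sqrt_nonneg _
    have hle : (P1+δ)*(P2+δ) ≤ (Real.sqrt (P1*P2) + ε/2)^2 := by nlinarith
    calc Real.sqrt ((P1+δ)*(P2+δ)) ≤ Real.sqrt ((Real.sqrt (P1*P2) + ε/2)^2) :=
          Real.sqrt_le_sqrt hle
      _ = Real.sqrt (P1*P2) + ε/2 := Real.sqrt_sq (by positivity)
  have hcd : c*d ≤ Real.sqrt (P3*P4) + ε/2 := by
    rw [sqrt_mul_sqrt_eq hcp hdp hc2 hd2]
    have hsq : Real.sqrt (P3*P4)^2 = P3*P4 := Real.sq_sqrt (by positivity)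
    have hsn : 0 ≤ Real.sqrt (P3*P4) := Real.sqrt_nonneg _
    have hle : (P3+δ)*(P4+δ) ≤ (Real.sqrt (P3*P4) + ε/2)^2 := by nlinarith
    calc Real.sqrt ((P3+δ)*(P4+δ)) ≤ Real.sqrt ((Real.sqrt (P3*P4) + ε/2)^2) :=
          Real.sqrt_le_sqrt hle
      _ = Real.sqrt (P3*P4) + ε/2 := Real.sqrt_sq (by positivity)
  refine (hmono.trans (le_of_eq hiden)).trans ?_
  have hfac : (0:ℝ) ≤ 2 * (a*b*c*d/((a*c+b*d)*(a*d+b*c))) := by positivity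
  have hsum : a*b + c*d ≤ Real.sqrt (P1*P2) + Real.sqrt (P3*P4) + ε := by linarith
  exact mul_le_mul_of_nonneg_left hsum hfac

lemma conj_expI (ψ : ℝ) :
    (starRingEnd ℂ) (Complex.exp ((ψ:ℂ) * Complex.I)) = Complex.exp (((-ψ:ℝ):ℂ) * Complex.I) := by
  rw [← Complex.exp_conj]
  congr 1
  simp [Complex.conj_I, Complex.conj_ofReal]

lemma rot_eq (w : ℂ) : w * Complex.exp (((-w.arg : ℝ):ℂ) * Complex.I) = (‖w‖ : ℂ) := by
  have h := Complex.norm_mul_exp_arg_mul_I w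
  calc w * Complex.exp (((-w.arg : ℝ):ℂ) * Complex.I)
      = ((‖w‖ : ℂ) * Complex.exp ((w.arg:ℂ) * Complex.I)) *
        Complex.exp (((-w.arg : ℝ):ℂ) * Complex.I) := by rw [h]
    _ = (‖w‖ : ℂ) * Complex.exp ((w.arg:ℂ) * Complex.I + ((-w.arg : ℝ):ℂ) * Complex.I) := by
        rw [mul_assoc, Complex.exp_add]
    _ = (‖w‖ : ℂ) := by
        rw [show (w.arg:ℂ) * Complex.I + ((-w.arg : ℝ):ℂ) * Complex.I = 0 from by push_cast; ring,
          Complex.exp_zero, mul_one]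

lemma normSq_expI (ψ : ℝ) : Complex.normSq (Complex.exp ((ψ:ℂ) * Complex.I)) = 1 := by
  rw [← Complex.sq_norm, Complex.norm_exp_ofReal_mul_I, one_pow]

lemma unit2 (p q φ : ℝ) (h : p^2 + q^2 = 1) :
    unitVec ![(p:ℂ), (q:ℂ) * Complex.exp ((φ:ℂ) * Complex.I)] := by
  rw [unitVec, Fin.sum_univ_two]
  simp only [Matrix.cons_val_zero, Matrix.cons_val_one, Matrix.head_cons]
  have h1 : (star ((p:ℂ)) * (p:ℂ)) = ((p^2 : ℝ) : ℂ) := by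
    rw [Complex.star_def, Complex.conj_ofReal]; push_cast; ring
  have h2 : star ((q:ℂ) * Complex.exp ((φ:ℂ) * Complex.I)) *
      ((q:ℂ) * Complex.exp ((φ:ℂ) * Complex.I)) = ((q^2 : ℝ) : ℂ) := by
    rw [Complex.star_def, map_mul, Complex.conj_ofReal, conj_expI]
    rw [show ((q:ℂ)) * Complex.exp (((-φ:ℝ):ℂ) * Complex.I) * ((q:ℂ) * Complex.exp ((φ:ℂ) * Complex.I))
      = (q:ℂ)*(q:ℂ) * (Complex.exp (((-φ:ℝ):ℂ) * Complex.I) * Complex.exp ((φ:ℂ) * Complex.I)) from by ring]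
    rw [← Complex.exp_add]
    push_cast
    ring_nf
    rw [Complex.exp_zero]
    push_cast
    ring
  rw [h1, h2, ← Complex.ofReal_add, h]
  norm_num

lemma claimA (c0 c3 : ℂ) (θ : ℝ) :
    (c0 * Complex.exp (((θ + Real.pi -
        (c0 * Complex.exp ((θ:ℂ) * Complex.I) + (starRingEnd ℂ) c3).arg : ℝ):ℂ) * Complex.I) +
     c3 * Complex.exp ((((c0 * Complex.exp ((θ:ℂ) * Complex.I) + (starRingEnd ℂ) c3).arg
        - Real.pi : ℝ):ℂ) * Complex.I)).re
    = - ‖c0 * Complex.exp ((θ:ℂ) * Complex.I) + (starRingEnd ℂ) c3‖ := by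
  set w := c0 * Complex.exp ((θ:ℂ) * Complex.I) + (starRingEnd ℂ) c3 with hw
  set a := w.arg with ha
  have h0 : Complex.exp (((θ + Real.pi - a : ℝ):ℂ) * Complex.I)
      = - (Complex.exp ((θ:ℂ) * Complex.I) * Complex.exp (((-a:ℝ):ℂ) * Complex.I)) := by
    have hsplit : ((θ + Real.pi - a : ℝ):ℂ) * Complex.I
        = (θ:ℂ) * Complex.I + ((-a:ℝ):ℂ) * Complex.I + (Real.pi:ℂ) * Complex.I := by
      push_cast; ring
    rw [hsplit, Complex.exp_add, Complex.exp_add, Complex.exp_pi_mul_I]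
    ring
  have h3 : Complex.exp (((a - Real.pi : ℝ):ℂ) * Complex.I)
      = - Complex.exp ((a:ℂ) * Complex.I) := by
    have hsplit : ((a:ℝ):ℂ) * Complex.I
        = ((a - Real.pi : ℝ):ℂ) * Complex.I + (Real.pi:ℂ) * Complex.I := by
      push_cast; ring
    have he : Complex.exp ((a:ℂ) * Complex.I)
        = Complex.exp (((a - Real.pi : ℝ):ℂ) * Complex.I) * Complex.exp ((Real.pi:ℂ) * Complex.I) := by
      rw [← Complex.exp_add, ← hsplit]
    rw [Complex.exp_pi_mul_I] at he
    linear_combination he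
  rw [h0, h3, Complex.add_re]
  have hterm3 : (c3 * -Complex.exp ((a:ℂ) * Complex.I)).re
      = (-((starRingEnd ℂ) c3 * Complex.exp (((-a:ℝ):ℂ) * Complex.I))).re := by
    rw [← Complex.conj_re (c3 * -Complex.exp ((a:ℂ) * Complex.I))]
    congr 1
    rw [map_mul, map_neg]
    rw [show ((a:ℝ):ℂ) * Complex.I = ((a:ℝ):ℂ) * Complex.I from rfl]
    rw [conj_expI a]
    ring
  rw [hterm3, ← Complex.add_re]
  have hcomb : c0 * -(Complex.exp ((θ:ℂ) * Complex.I) * Complex.exp (((-a:ℝ):ℂ) * Complex.I)) +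
      -((starRingEnd ℂ) c3 * Complex.exp (((-a:ℝ):ℂ) * Complex.I))
      = -(w * Complex.exp (((-a:ℝ):ℂ) * Complex.I)) := by
    rw [hw]; ring
  rw [hcomb, Complex.neg_re, ha, rot_eq, Complex.ofReal_re]

end Aux5

section Aux6
open Complex

lemma ofReal_mul_re' (r : ℝ) (z : ℂ) : ((r:ℂ) * z).re = r * z.re := by
  rw [Complex.mul_re, Complex.ofReal_re, Complex.ofReal_im]
  simp

lemma construct (s t : Fin 4 → ℝ) (u : Fin 4 → ℂ)
    (hs : ∀ i, 0 ≤ s i) (ht : ∀ i, 0 ≤ t i)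
    (hpos : ∀ x y z : Fin 2 → ℂ, unitVec x → unitVec y → unitVec z →
      0 ≤ Drv s t (kron3 x y z) + 2 * (Wv u (kron3 x y z)).re)
    (θ : ℝ) {r : ℝ} (hr : 0 < r) {ε : ℝ} (hε : 0 < ε) :
    bFn u θ ≤ fFn s t r + ε := by
  have hrinv : (0:ℝ) < r⁻¹ := by positivity
  have hP1 : 0 ≤ s 0 * r⁻¹ + t 3 * r := by
    have := hs 0; have := ht 3; positivity
  have hP2 : 0 ≤ s 3 * r⁻¹ + t 0 * r := by
    have := hs 3; have := ht 0; positivity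
  have hP3 : 0 ≤ s 1 * r⁻¹ + t 2 * r := by
    have := hs 1; have := ht 2; positivity
  have hP4 : 0 ≤ s 2 * r⁻¹ + t 1 * r := by
    have := hs 2; have := ht 1; positivity
  obtain ⟨Q, M, hQ0, hQ1, hM0, hM1, hkey⟩ :=
    keyS (s 0 * r⁻¹ + t 3 * r) (s 3 * r⁻¹ + t 0 * r) (s 1 * r⁻¹ + t 2 * r)
      (s 2 * r⁻¹ + t 1 * r) hP1 hP2 hP3 hP4 hε
  obtain ⟨p1, hp1p, hp1sq⟩ : ∃ p:ℝ, 0 < p ∧ p^2 = 1/(1+r^2) :=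
    ⟨Real.sqrt (1/(1+r^2)), Real.sqrt_pos.mpr (by positivity), Real.sq_sqrt (by positivity)⟩
  obtain ⟨q1, hq1p, hq1sq⟩ : ∃ q:ℝ, 0 < q ∧ q^2 = Q :=
    ⟨Real.sqrt Q, Real.sqrt_pos.mpr hQ0, Real.sq_sqrt hQ0.le⟩
  obtain ⟨q2, hq2p, hq2sq⟩ : ∃ q:ℝ, 0 < q ∧ q^2 = 1 - Q :=
    ⟨Real.sqrt (1-Q), Real.sqrt_pos.mpr (by linarith), Real.sq_sqrt (by linarith)⟩
  obtain ⟨m1, hm1p, hm1sq⟩ : ∃ q:ℝ, 0 < q ∧ q^2 = M :=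
    ⟨Real.sqrt M, Real.sqrt_pos.mpr hM0, Real.sq_sqrt hM0.le⟩
  obtain ⟨m2, hm2p, hm2sq⟩ : ∃ q:ℝ, 0 < q ∧ q^2 = 1 - M :=
    ⟨Real.sqrt (1-M), Real.sqrt_pos.mpr (by linarith), Real.sq_sqrt (by linarith)⟩
  set w1 := u 0 * Complex.exp ((θ:ℂ) * Complex.I) + (starRingEnd ℂ) (u 3) with hw1
  set w2 := u 1 * Complex.exp ((θ:ℂ) * Complex.I) + (starRingEnd ℂ) (u 2) with hw2
  set a1 := w1.arg with ha1
  set a2 := w2.arg with ha2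
  set A1 : ℝ := -(θ/2) with hA1
  set A2 : ℝ := (a1+a2)/2 - θ/2 - Real.pi with hA2
  set A3 : ℝ := (a1-a2)/2 with hA3
  set x : Fin 2 → ℂ := ![(p1:ℂ), ((r*p1 : ℝ):ℂ) * Complex.exp ((A1:ℂ) * Complex.I)] with hxdef
  set y : Fin 2 → ℂ := ![(q1:ℂ), (q2:ℂ) * Complex.exp ((A2:ℂ) * Complex.I)] with hydef
  set z : Fin 2 → ℂ := ![(m1:ℂ), (m2:ℂ) * Complex.exp ((A3:ℂ) * Complex.I)] with hzdef
  have hux : unitVec x := by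
    rw [hxdef]; apply unit2
    rw [show (r*p1)^2 = r^2*p1^2 from by ring, hp1sq]
    field_simp
  have huy : unitVec y := by
    rw [hydef]; apply unit2; rw [hq1sq, hq2sq]; ring
  have huz : unitVec z := by
    rw [hzdef]; apply unit2; rw [hm1sq, hm2sq]; ring
  have hmain := hpos x y z hux huy huz
  have hx0 : x 0 = (p1:ℂ) := by rw [hxdef]; rfl
  have hx1 : x 1 = ((r*p1 : ℝ):ℂ) * Complex.exp ((A1:ℂ) * Complex.I) := by rw [hxdef]; rfl
  have hy0 : y 0 = (q1:ℂ) := by rw [hydef]; rfl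
  have hy1 : y 1 = (q2:ℂ) * Complex.exp ((A2:ℂ) * Complex.I) := by rw [hydef]; rfl
  have hz0 : z 0 = (m1:ℂ) := by rw [hzdef]; rfl
  have hz1 : z 1 = (m2:ℂ) * Complex.exp ((A3:ℂ) * Complex.I) := by rw [hzdef]; rfl
  have hDrv : Drv s t (kron3 x y z) =
      p1*(r*p1) * ((s 0 * r⁻¹ + t 3 * r)*(Q*M) + (s 3 * r⁻¹ + t 0 * r)*((1-Q)*(1-M)) +
        (s 1 * r⁻¹ + t 2 * r)*(Q*(1-M)) + (s 2 * r⁻¹ + t 1 * r)*((1-Q)*M)) := by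
    simp only [Drv, k0, k1, k2, k3, k4, k5, k6, k7, hx0, hx1, hy0, hy1, hz0, hz1,
      map_mul, Complex.normSq_ofReal, normSq_expI, mul_one]
    rw [show (1:ℝ) - Q = q2^2 from hq2sq.symm, show (1:ℝ) - M = m2^2 from hm2sq.symm,
      show Q = q1^2 from hq1sq.symm, show M = m1^2 from hm1sq.symm]
    field_simp
    ring
  have hv07 : kron3 x y z 0 * (starRingEnd ℂ) (kron3 x y z 7) =
      ((p1*(r*p1)*(q1*q2)*(m1*m2) : ℝ):ℂ) *
        Complex.exp (((θ + Real.pi - a1 : ℝ):ℂ) * Complex.I) := by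
    rw [k0, k7, hx0, hx1, hy0, hy1, hz0, hz1]
    simp only [map_mul, Complex.conj_ofReal, conj_expI]
    calc (p1:ℂ) * (q1:ℂ) * (m1:ℂ) *
        (((r*p1 : ℝ):ℂ) * Complex.exp (((-A1 : ℝ):ℂ) * Complex.I) *
          ((q2:ℂ) * Complex.exp (((-A2 : ℝ):ℂ) * Complex.I)) *
          ((m2:ℂ) * Complex.exp (((-A3 : ℝ):ℂ) * Complex.I)))
        = ((p1*(r*p1)*(q1*q2)*(m1*m2) : ℝ):ℂ) *
          (Complex.exp (((-A1 : ℝ):ℂ) * Complex.I) * Complex.exp (((-A2 : ℝ):ℂ) * Complex.I) *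
            Complex.exp (((-A3 : ℝ):ℂ) * Complex.I)) := by push_cast; ring
      _ = ((p1*(r*p1)*(q1*q2)*(m1*m2) : ℝ):ℂ) *
          Complex.exp (((θ + Real.pi - a1 : ℝ):ℂ) * Complex.I) := by
          rw [← Complex.exp_add, ← Complex.exp_add]
          congr 1
          rw [hA1, hA2, hA3]
          push_cast
          ring
  have hv16 : kron3 x y z 1 * (starRingEnd ℂ) (kron3 x y z 6) =
      ((p1*(r*p1)*(q1*q2)*(m1*m2) : ℝ):ℂ) *
        Complex.exp (((θ + Real.pi - a2 : ℝ):ℂ) * Complex.I) := by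
    rw [k1, k6, hx0, hx1, hy0, hy1, hz0, hz1]
    simp only [map_mul, Complex.conj_ofReal, conj_expI]
    calc (p1:ℂ) * (q1:ℂ) * ((m2:ℂ) * Complex.exp ((A3:ℂ) * Complex.I)) *
        (((r*p1 : ℝ):ℂ) * Complex.exp (((-A1 : ℝ):ℂ) * Complex.I) *
          ((q2:ℂ) * Complex.exp (((-A2 : ℝ):ℂ) * Complex.I)) * (m1:ℂ))
        = ((p1*(r*p1)*(q1*q2)*(m1*m2) : ℝ):ℂ) *
          (Complex.exp ((A3:ℂ) * Complex.I) * Complex.exp (((-A1 : ℝ):ℂ) * Complex.I) *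
            Complex.exp (((-A2 : ℝ):ℂ) * Complex.I)) := by push_cast; ring
      _ = ((p1*(r*p1)*(q1*q2)*(m1*m2) : ℝ):ℂ) *
          Complex.exp (((θ + Real.pi - a2 : ℝ):ℂ) * Complex.I) := by
          rw [← Complex.exp_add, ← Complex.exp_add]
          congr 1
          rw [hA1, hA2, hA3]
          push_cast
          ring
  have hv25 : kron3 x y z 2 * (starRingEnd ℂ) (kron3 x y z 5) =
      ((p1*(r*p1)*(q1*q2)*(m1*m2) : ℝ):ℂ) *
        Complex.exp (((a2 - Real.pi : ℝ):ℂ) * Complex.I) := by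
    rw [k2, k5, hx0, hx1, hy0, hy1, hz0, hz1]
    simp only [map_mul, Complex.conj_ofReal, conj_expI]
    calc (p1:ℂ) * ((q2:ℂ) * Complex.exp ((A2:ℂ) * Complex.I)) * (m1:ℂ) *
        (((r*p1 : ℝ):ℂ) * Complex.exp (((-A1 : ℝ):ℂ) * Complex.I) * (q1:ℂ) *
          ((m2:ℂ) * Complex.exp (((-A3 : ℝ):ℂ) * Complex.I)))
        = ((p1*(r*p1)*(q1*q2)*(m1*m2) : ℝ):ℂ) *
          (Complex.exp ((A2:ℂ) * Complex.I) * Complex.exp (((-A1 : ℝ):ℂ) * Complex.I) *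
            Complex.exp (((-A3 : ℝ):ℂ) * Complex.I)) := by push_cast; ring
      _ = ((p1*(r*p1)*(q1*q2)*(m1*m2) : ℝ):ℂ) *
          Complex.exp (((a2 - Real.pi : ℝ):ℂ) * Complex.I) := by
          rw [← Complex.exp_add, ← Complex.exp_add]
          congr 1
          rw [hA1, hA2, hA3]
          push_cast
          ring
  have hv34 : kron3 x y z 3 * (starRingEnd ℂ) (kron3 x y z 4) =
      ((p1*(r*p1)*(q1*q2)*(m1*m2) : ℝ):ℂ) *
        Complex.exp (((a1 - Real.pi : ℝ):ℂ) * Complex.I) := by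
    rw [k3, k4, hx0, hx1, hy0, hy1, hz0, hz1]
    simp only [map_mul, Complex.conj_ofReal, conj_expI]
    calc (p1:ℂ) * ((q2:ℂ) * Complex.exp ((A2:ℂ) * Complex.I)) *
        ((m2:ℂ) * Complex.exp ((A3:ℂ) * Complex.I)) *
        (((r*p1 : ℝ):ℂ) * Complex.exp (((-A1 : ℝ):ℂ) * Complex.I) * (q1:ℂ) * (m1:ℂ))
        = ((p1*(r*p1)*(q1*q2)*(m1*m2) : ℝ):ℂ) *
          (Complex.exp ((A2:ℂ) * Complex.I) * Complex.exp ((A3:ℂ) * Complex.I) *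
            Complex.exp (((-A1 : ℝ):ℂ) * Complex.I)) := by push_cast; ring
      _ = ((p1*(r*p1)*(q1*q2)*(m1*m2) : ℝ):ℂ) *
          Complex.exp (((a1 - Real.pi : ℝ):ℂ) * Complex.I) := by
          rw [← Complex.exp_add, ← Complex.exp_add]
          congr 1
          rw [hA1, hA2, hA3]
          push_cast
          ring
  have hWv : Wv u (kron3 x y z) = ((p1*(r*p1)*(q1*q2)*(m1*m2) : ℝ):ℂ) *
      (u 0 * Complex.exp (((θ + Real.pi - a1 : ℝ):ℂ) * Complex.I) +
       u 3 * Complex.exp (((a1 - Real.pi : ℝ):ℂ) * Complex.I) +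
       (u 1 * Complex.exp (((θ + Real.pi - a2 : ℝ):ℂ) * Complex.I) +
        u 2 * Complex.exp (((a2 - Real.pi : ℝ):ℂ) * Complex.I))) := by
    rw [Wv]
    simp only [Complex.star_def]
    rw [hv07, hv16, hv25, hv34]
    ring
  have hre : (Wv u (kron3 x y z)).re =
      (p1*(r*p1)*(q1*q2)*(m1*m2)) * (-(‖w1‖) - ‖w2‖) := by
    rw [hWv, ofReal_mul_re']
    congr 1
    have hA := claimA (u 0) (u 3) θ
    have hB := claimA (u 1) (u 2) θ
    rw [← hw1, ← ha1] at hA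
    rw [← hw2, ← ha2] at hB
    rw [Complex.add_re, hA, hB]
    ring
  -- assembly
  have hGpos : 0 < q1*q2*(m1*m2) := by positivity
  have hGs : q1*q2*(m1*m2) = Real.sqrt (Q*M*((1-Q)*(1-M))) := by
    rw [sqrt_mul_sqrt_eq hq1p hq2p hq1sq hq2sq, sqrt_mul_sqrt_eq hm1p hm2p hm1sq hm2sq,
      ← Real.sqrt_mul (by nlinarith : (0:ℝ) ≤ Q*(1-Q))]
    congr 1
    ring
  rw [hDrv, hre] at hmain
  have hppos : 0 < p1*(r*p1) := by positivity
  have hApos : 0 < 2*(p1*(r*p1))*(q1*q2*(m1*m2)) := by positivity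
  have hstep2 : p1*(r*p1) * ((s 0 * r⁻¹ + t 3 * r)*(Q*M) + (s 3 * r⁻¹ + t 0 * r)*((1-Q)*(1-M)) +
        (s 1 * r⁻¹ + t 2 * r)*(Q*(1-M)) + (s 2 * r⁻¹ + t 1 * r)*((1-Q)*M))
      ≤ p1*(r*p1) * (2 * Real.sqrt (Q*M*((1-Q)*(1-M))) *
        (Real.sqrt ((s 0 * r⁻¹ + t 3 * r) * (s 3 * r⁻¹ + t 0 * r)) +
         Real.sqrt ((s 1 * r⁻¹ + t 2 * r) * (s 2 * r⁻¹ + t 1 * r)) + ε)) :=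
    mul_le_mul_of_nonneg_left hkey hppos.le
  have hbfn : bFn u θ = ‖w1‖ + ‖w2‖ := by
    rw [bFn, hw1, hw2]
    simp only [Complex.star_def]
  have hffn : fFn s t r = Real.sqrt ((s 0 * r⁻¹ + t 3 * r) * (s 3 * r⁻¹ + t 0 * r)) +
      Real.sqrt ((s 1 * r⁻¹ + t 2 * r) * (s 2 * r⁻¹ + t 1 * r)) := rfl
  rw [hbfn, hffn]
  have hfinal : (2*(p1*(r*p1))*(q1*q2*(m1*m2))) * (‖w1‖ + ‖w2‖) ≤
      (2*(p1*(r*p1))*(q1*q2*(m1*m2))) *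
        (Real.sqrt ((s 0 * r⁻¹ + t 3 * r) * (s 3 * r⁻¹ + t 0 * r)) +
         Real.sqrt ((s 1 * r⁻¹ + t 2 * r) * (s 2 * r⁻¹ + t 1 * r)) + ε) := by
    rw [← hGs] at hstep2
    nlinarith [hmain, hstep2]
  exact le_of_mul_le_mul_left hfinal hApos

end Aux6
/-- a non-positive X-shaped matrix `X(s,t,u)` with `s,t ≥ 0` is an
entanglement witness iff `A(s,t) ≥ B(u)`. -/
theorem stmt4 (s t : Fin 4 → ℝ) (u : Fin 4 → ℂ)
    (hs : ∀ i, 0 ≤ s i) (ht : ∀ i, 0 ≤ t i)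
    (hnp : ¬ (XMat s t u).PosSemidef) :
    IsEW (XMat s t u) ↔ Bfun u ≤ Afun s t := by
  constructor
  · intro hEW
    have hpos : ∀ x y z : Fin 2 → ℂ, unitVec x → unitVec y → unitVec z →
        0 ≤ Drv s t (kron3 x y z) + 2 * (Wv u (kron3 x y z)).re := by
      intro x y z hx hy hz
      have h := hEW.2.2 _ (product_isSep x y z hx hy hz)
      rw [pairing_product] at h
      exact Complex.zero_le_real.mp h
    rw [Bfun_eq]
    refine ciSup_le fun θ => ?_
    refine le_Afun s t _ fun r hr => ?_
    refine le_of_forall_pos_le_add fun ε hε => ?_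
    exact construct s t u hs ht hpos θ hr hε
  · intro hBA
    exact ⟨XMat_isHermitian s t u, hnp, fun ρ hρ => sep_pairing_nonneg s t u hs ht hBA ρ hρ⟩

end
end

section
/- For every z ∈ ℂ⁴, C(z) = B(z₁,z₂,z₃,z̄₄), where z̄₄ denotes the complex conjugate of z₄. -/
open scoped ComplexOrder Matrix

noncomputable section

private lemma abs_re_mulE_le (w : ℂ) (x : ℝ) :
    |(w * Complex.exp ((x : ℂ) * Complex.I)).re| ≤ ‖w‖ := by
  calc |(w * Complex.exp ((x : ℂ) * Complex.I)).re|
      ≤ ‖w * Complex.exp ((x : ℂ) * Complex.I)‖ := Complex.abs_re_le_norm _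
    _ = ‖w‖ := by
        rw [norm_mul, Complex.norm_exp_ofReal_mul_I, mul_one]

private lemma re_mulE_arg (w : ℂ) :
    (w * Complex.exp (((-w.arg : ℝ) : ℂ) * Complex.I)).re = ‖w‖ := by
  have key : w * Complex.exp (((-w.arg : ℝ) : ℂ) * Complex.I) = (‖w‖ : ℂ) := by
    rw [show (((-w.arg : ℝ) : ℂ) * Complex.I) = -((w.arg : ℂ) * Complex.I) by push_cast; ring,
      Complex.exp_neg]
    have he : Complex.exp ((w.arg : ℂ) * Complex.I) ≠ 0 := Complex.exp_ne_zero _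
    field_simp
    rw [mul_comm, Complex.norm_mul_exp_arg_mul_I]
  rw [key, Complex.ofReal_re]

private lemma star_mulE (w : ℂ) (β : ℝ) :
    star (w * Complex.exp (((β : ℝ) : ℂ) * Complex.I))
    = star w * Complex.exp (((-β : ℝ) : ℂ) * Complex.I) := by
  have he : starRingEnd ℂ (Complex.exp ((β : ℂ) * Complex.I))
      = Complex.exp (((-β : ℝ) : ℂ) * Complex.I) := by
    rw [← Complex.exp_conj]
    congr 1
    simp
  rw [star_mul']
  rw [show (star (Complex.exp ((β : ℂ) * Complex.I)))
      = starRingEnd ℂ (Complex.exp ((β : ℂ) * Complex.I)) from rfl, he]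

private lemma regroup (z : Fin 4 → ℂ) (α β γ : ℝ) :
    (z 0 * Complex.exp (((α + β + γ : ℝ) : ℂ) * Complex.I)).re +
    (z 1 * Complex.exp (((α : ℝ) : ℂ) * Complex.I)).re +
    (z 2 * Complex.exp (((β : ℝ) : ℂ) * Complex.I)).re +
    (z 3 * Complex.exp (((γ : ℝ) : ℂ) * Complex.I)).re
    = ((z 0 * Complex.exp (((α + β : ℝ) : ℂ) * Complex.I) + z 3) *
        Complex.exp (((γ : ℝ) : ℂ) * Complex.I)).re +
      ((z 1 * Complex.exp (((α + β : ℝ) : ℂ) * Complex.I) + star (z 2)) *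
        Complex.exp (((-β : ℝ) : ℂ) * Complex.I)).re := by
  have h2 : (z 2 * Complex.exp (((β : ℝ) : ℂ) * Complex.I)).re
      = (star (z 2) * Complex.exp (((-β : ℝ) : ℂ) * Complex.I)).re := by
    rw [← Complex.conj_re (z 2 * Complex.exp (((β : ℝ) : ℂ) * Complex.I)), ← star_mulE]
    rfl
  have h0 : Complex.exp (((α + β + γ : ℝ) : ℂ) * Complex.I)
      = Complex.exp (((α + β : ℝ) : ℂ) * Complex.I) *
        Complex.exp (((γ : ℝ) : ℂ) * Complex.I) := by
    rw [← Complex.exp_add]; push_cast; ring_nf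
  have h1 : Complex.exp (((α : ℝ) : ℂ) * Complex.I)
      = Complex.exp (((α + β : ℝ) : ℂ) * Complex.I) *
        Complex.exp (((-β : ℝ) : ℂ) * Complex.I) := by
    rw [← Complex.exp_add]; push_cast; ring_nf
  rw [h0, h1, h2]
  simp only [add_mul, Complex.add_re, mul_assoc]
  ring

/-- `C(z) = B(z₁, z₂, z₃, z̄₄)`. -/
theorem stmt5 (z : Fin 4 → ℂ) :
    Cfun z = Bfun ![z 0, z 1, z 2, star (z 3)] := by
  unfold Cfun Bfun
  simp only [Matrix.cons_val_zero, Matrix.cons_val_one, Matrix.head_cons,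
    Matrix.cons_val_two, Matrix.tail_cons, Matrix.cons_val_three, star_star]
  have hGbdd : BddAbove (Set.range (fun θ : ℝ =>
      ‖z 0 * Complex.exp ((θ : ℂ) * Complex.I) + z 3‖ +
      ‖z 1 * Complex.exp ((θ : ℂ) * Complex.I) + star (z 2)‖)) := by
    refine ⟨‖z 0‖ + ‖z 3‖ +
      (‖z 1‖ + ‖z 2‖), ?_⟩
    rintro x ⟨θ, rfl⟩
    refine add_le_add (le_trans (norm_add_le _ _) ?_)
      (le_trans (norm_add_le _ _) ?_)
    · rw [norm_mul, Complex.norm_exp_ofReal_mul_I, mul_one]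
    · rw [norm_mul, Complex.norm_exp_ofReal_mul_I, mul_one]
      simp
  have hFbdd : BddAbove (Set.range (fun p : ℝ × ℝ × ℝ =>
      |(z 0 * Complex.exp (((p.1 + p.2.1 + p.2.2 : ℝ) : ℂ) * Complex.I)).re +
       (z 1 * Complex.exp (((p.1 : ℝ) : ℂ) * Complex.I)).re +
       (z 2 * Complex.exp (((p.2.1 : ℝ) : ℂ) * Complex.I)).re +
       (z 3 * Complex.exp (((p.2.2 : ℝ) : ℂ) * Complex.I)).re|)) := by
    refine ⟨‖z 0‖ + ‖z 1‖ + ‖z 2‖ +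
      ‖z 3‖, ?_⟩
    rintro x ⟨p, rfl⟩
    refine le_trans (abs_add_le _ _) (add_le_add (le_trans (abs_add_le _ _)
      (add_le_add (le_trans (abs_add_le _ _) (add_le_add ?_ ?_)) ?_)) ?_) <;>
      exact abs_re_mulE_le _ _
  apply le_antisymm
  · apply ciSup_le
    rintro ⟨α, β, γ⟩
    refine le_ciSup_of_le hGbdd (α + β) ?_
    beta_reduce
    rw [regroup z α β γ]
    exact (abs_add_le _ _).trans
      (add_le_add (abs_re_mulE_le _ _) (abs_re_mulE_le _ _))
  · apply ciSup_le
    intro θ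
    set w1 := z 0 * Complex.exp ((θ : ℂ) * Complex.I) + z 3 with hw1
    set w2 := z 1 * Complex.exp ((θ : ℂ) * Complex.I) + star (z 2) with hw2
    refine le_ciSup_of_le hFbdd (θ - w2.arg, w2.arg, -w1.arg) ?_
    dsimp only
    have hab : (θ - w2.arg) + w2.arg = θ := by ring
    have h := regroup z (θ - w2.arg) w2.arg (-w1.arg)
    rw [hab] at h
    rw [← hw1, ← hw2, re_mulE_arg w1, re_mulE_arg w2] at h
    rw [show θ - w2.arg + w2.arg + -w1.arg = θ + -w1.arg from by ring]
    calc ‖w1‖ + ‖w2‖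
        = _ := h.symm
      _ ≤ _ := le_abs_self _

end
end

section
/- (Gühne's criterion.) Let ϱ be a separable three qubit state whose X-part is X(a,b,c). Then for every z ∈ ℂ⁴, L(ϱ,z) ≤ C(z)·Δ_ϱ, where Δ_ϱ := min{√(a₁b₁), √(a₂b₂), √(a₃b₃), √(a₄b₄), (a₁b₂b₃a₄)^{1/4}, (b₁a₂a₃b₄)^{1/4}}. -/
open scoped ComplexOrder Matrix

noncomputable section

lemma cs_sum {n : ℕ} (f g : Fin n → ℝ) (hf : ∀ k, 0 ≤ f k) (hg : ∀ k, 0 ≤ g k) :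
    ∑ k, Real.sqrt (f k * g k) ≤ Real.sqrt ((∑ k, f k) * (∑ k, g k)) := by
  rw [Real.sqrt_mul (Finset.sum_nonneg fun k _ => hf k)]
  calc ∑ k, Real.sqrt (f k * g k) = ∑ k, Real.sqrt (f k) * Real.sqrt (g k) := by
        exact Finset.sum_congr rfl fun k _ => Real.sqrt_mul (hf k) _
    _ ≤ _ := Real.sum_sqrt_mul_sqrt_le _ hf hg

lemma conj_polar (Z : ℂ) :
    (starRingEnd ℂ) Z = (norm Z : ℝ) * Complex.exp (((-Z.arg : ℝ) : ℂ) * Complex.I) := by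
  conv_lhs => rw [← Complex.norm_mul_exp_arg_mul_I Z]
  rw [map_mul, Complex.conj_ofReal, ← Complex.exp_conj]
  congr 1
  rw [map_mul, Complex.conj_ofReal, Complex.conj_I]
  push_cast
  ring

lemma re_rot_abs (w : ℂ) (θ : ℝ) :
    |(w * Complex.exp ((θ : ℂ) * Complex.I)).re| ≤ norm w := by
  calc |(w * Complex.exp ((θ : ℂ) * Complex.I)).re|
      ≤ norm (w * Complex.exp ((θ : ℂ) * Complex.I)) := Complex.abs_re_le_norm _
    _ = norm w := by rw [norm_mul, Complex.norm_exp_ofReal_mul_I, mul_one]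

lemma cfun_bdd (z : Fin 4 → ℂ) : BddAbove (Set.range fun p : ℝ × ℝ × ℝ =>
    |(z 0 * Complex.exp (((p.1 + p.2.1 + p.2.2 : ℝ) : ℂ) * Complex.I)).re +
     (z 1 * Complex.exp (((p.1 : ℝ) : ℂ) * Complex.I)).re +
     (z 2 * Complex.exp (((p.2.1 : ℝ) : ℂ) * Complex.I)).re +
     (z 3 * Complex.exp (((p.2.2 : ℝ) : ℂ) * Complex.I)).re|) := by
  refine ⟨norm (z 0) + norm (z 1) + norm (z 2) + norm (z 3), ?_⟩
  rintro _ ⟨p, rfl⟩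
  set r0 := (z 0 * Complex.exp (((p.1 + p.2.1 + p.2.2 : ℝ) : ℂ) * Complex.I)).re
  set r1 := (z 1 * Complex.exp (((p.1 : ℝ) : ℂ) * Complex.I)).re
  set r2 := (z 2 * Complex.exp (((p.2.1 : ℝ) : ℂ) * Complex.I)).re
  set r3 := (z 3 * Complex.exp (((p.2.2 : ℝ) : ℂ) * Complex.I)).re
  have A1 : |r0 + r1 + r2 + r3| ≤ |r0 + r1 + r2| + |r3| := abs_add_le _ _
  have A2 : |r0 + r1 + r2| ≤ |r0 + r1| + |r2| := abs_add_le _ _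
  have A3 : |r0 + r1| ≤ |r0| + |r1| := abs_add_le _ _
  have B0 : |r0| ≤ norm (z 0) := re_rot_abs _ _
  have B1 : |r1| ≤ norm (z 1) := re_rot_abs _ _
  have B2 : |r2| ≤ norm (z 2) := re_rot_abs _ _
  have B3 : |r3| ≤ norm (z 3) := re_rot_abs _ _
  simp only
  linarith

lemma cfun_ge (z : Fin 4 → ℂ) (α β γ : ℝ) :
    |(z 0 * Complex.exp (((α + β + γ : ℝ) : ℂ) * Complex.I)).re +
     (z 1 * Complex.exp (((α : ℝ) : ℂ) * Complex.I)).re +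
     (z 2 * Complex.exp (((β : ℝ) : ℂ) * Complex.I)).re +
     (z 3 * Complex.exp (((γ : ℝ) : ℂ) * Complex.I)).re| ≤ Cfun z :=
  le_ciSup (cfun_bdd z) (α, β, γ)

lemma cfun_nonneg (z : Fin 4 → ℂ) : 0 ≤ Cfun z :=
  le_trans (abs_nonneg _) (cfun_ge z 0 0 0)

lemma comb (s t u : ℝ) : Complex.exp (((s + t + u : ℝ) : ℂ) * Complex.I) =
    Complex.exp ((s : ℂ) * Complex.I) * Complex.exp ((t : ℂ) * Complex.I) *
      Complex.exp ((u : ℂ) * Complex.I) := by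
  push_cast; rw [add_mul, add_mul, Complex.exp_add, Complex.exp_add]

lemma conj_rot (r θ : ℝ) : (starRingEnd ℂ) ((r : ℂ) * Complex.exp ((θ : ℂ) * Complex.I)) =
    (r : ℂ) * Complex.exp (((-θ : ℝ) : ℂ) * Complex.I) := by
  rw [map_mul, Complex.conj_ofReal, ← Complex.exp_conj]
  congr 1
  rw [map_mul, Complex.conj_ofReal, Complex.conj_I]
  push_cast; ring

lemma abs_rot (r θ : ℝ) (h : 0 ≤ r) :
    norm ((r : ℂ) * Complex.exp ((θ : ℂ) * Complex.I)) = r := by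
  rw [norm_mul, Complex.norm_exp_ofReal_mul_I, mul_one, Complex.norm_real, Real.norm_eq_abs, _root_.abs_of_nonneg h]

lemma key_s7 (z : Fin 4 → ℂ) (X Y Z : ℂ) :
    (z 0 * (X * Y * Z) + z 1 * (X * Y * (starRingEnd ℂ) Z) +
     z 2 * (X * (starRingEnd ℂ) Y * Z) + z 3 * ((starRingEnd ℂ) X * Y * Z)).re
      ≤ Cfun z * (norm X * norm Y * norm Z) := by
  obtain ⟨rX, θX, hrX, rfl⟩ : ∃ (r θ : ℝ), 0 ≤ r ∧ X = (r : ℂ) * Complex.exp ((θ : ℂ) * Complex.I) :=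
    ⟨norm X, X.arg, norm_nonneg X, (Complex.norm_mul_exp_arg_mul_I X).symm⟩
  obtain ⟨rY, θY, hrY, rfl⟩ : ∃ (r θ : ℝ), 0 ≤ r ∧ Y = (r : ℂ) * Complex.exp ((θ : ℂ) * Complex.I) :=
    ⟨norm Y, Y.arg, norm_nonneg Y, (Complex.norm_mul_exp_arg_mul_I Y).symm⟩
  obtain ⟨rZ, θZ, hrZ, rfl⟩ : ∃ (r θ : ℝ), 0 ≤ r ∧ Z = (r : ℂ) * Complex.exp ((θ : ℂ) * Complex.I) :=
    ⟨norm Z, Z.arg, norm_nonneg Z, (Complex.norm_mul_exp_arg_mul_I Z).symm⟩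
  rw [conj_rot, conj_rot, conj_rot, abs_rot _ _ hrX, abs_rot _ _ hrY, abs_rot _ _ hrZ]
  set α : ℝ := θX + θY + (-θZ) with hα
  set β : ℝ := θX + (-θY) + θZ with hβ
  set γ : ℝ := (-θX) + θY + θZ with hγ
  have hsum : (z 0 * ((rX : ℂ) * Complex.exp ((θX : ℂ) * Complex.I) *
        ((rY : ℂ) * Complex.exp ((θY : ℂ) * Complex.I)) *
        ((rZ : ℂ) * Complex.exp ((θZ : ℂ) * Complex.I))) +
      z 1 * ((rX : ℂ) * Complex.exp ((θX : ℂ) * Complex.I) *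
        ((rY : ℂ) * Complex.exp ((θY : ℂ) * Complex.I)) *
        ((rZ : ℂ) * Complex.exp (((-θZ : ℝ) : ℂ) * Complex.I))) +
      z 2 * ((rX : ℂ) * Complex.exp ((θX : ℂ) * Complex.I) *
        ((rY : ℂ) * Complex.exp (((-θY : ℝ) : ℂ) * Complex.I)) *
        ((rZ : ℂ) * Complex.exp ((θZ : ℂ) * Complex.I))) +
      z 3 * ((rX : ℂ) * Complex.exp (((-θX : ℝ) : ℂ) * Complex.I) *
        ((rY : ℂ) * Complex.exp ((θY : ℂ) * Complex.I)) *
        ((rZ : ℂ) * Complex.exp ((θZ : ℂ) * Complex.I)))) =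
      (z 0 * Complex.exp (((α + β + γ : ℝ) : ℂ) * Complex.I) +
       z 1 * Complex.exp (((α : ℝ) : ℂ) * Complex.I) +
       z 2 * Complex.exp (((β : ℝ) : ℂ) * Complex.I) +
       z 3 * Complex.exp (((γ : ℝ) : ℂ) * Complex.I)) * ((rX * rY * rZ : ℝ) : ℂ) := by
    rw [show α + β + γ = θX + θY + θZ from by rw [hα, hβ, hγ]; ring, hα, hβ, hγ]
    simp only [comb]
    push_cast
    ring
  rw [hsum, mul_comm, Complex.re_ofReal_mul]
  have hre : ((z 0 * Complex.exp (((α + β + γ : ℝ) : ℂ) * Complex.I) +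
       z 1 * Complex.exp (((α : ℝ) : ℂ) * Complex.I) +
       z 2 * Complex.exp (((β : ℝ) : ℂ) * Complex.I) +
       z 3 * Complex.exp (((γ : ℝ) : ℂ) * Complex.I))).re ≤ Cfun z := by
    simp only [Complex.add_re]
    exact le_trans (le_abs_self _) (cfun_ge z α β γ)
  calc rX * rY * rZ * _ ≤ rX * rY * rZ * Cfun z := by
        apply mul_le_mul_of_nonneg_left hre (by positivity)
    _ = Cfun z * (rX * rY * rZ) := by ring

/-- Gühne's criterion: a separable state with X-part `X(a,b,c)`
satisfies `L(ϱ,z) ≤ C(z) Δ_ϱ` for every `z ∈ ℂ⁴`. -/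
theorem stmt7 (ρ : Matrix (Fin 8) (Fin 8) ℂ) (a b : Fin 4 → ℝ) (c : Fin 4 → ℂ)
    (hstate : IsState ρ) (hsep : IsSep ρ) (hX : Xpart ρ = XMat a b c)
    (z : Fin 4 → ℂ) :
    Lfun c z ≤ Cfun z *
      min (min (min (Real.sqrt (a 0 * b 0)) (Real.sqrt (a 1 * b 1)))
               (min (Real.sqrt (a 2 * b 2)) (Real.sqrt (a 3 * b 3))))
          (min (Real.sqrt (Real.sqrt (a 0 * b 1 * b 2 * a 3)))
               (Real.sqrt (Real.sqrt (b 0 * a 1 * a 2 * b 3)))) := by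
  classical
  obtain ⟨n, p, x, y, u, hp0, hps, hx, hy, hu, hρ⟩ := hsep
  set v : Fin n → Fin 8 → ℂ := fun k => kron3 (x k) (y k) (u k) with hvdef
  have hv0 : ∀ k, v k 0 = x k 0 * y k 0 * u k 0 := fun k => rfl
  have hv1 : ∀ k, v k 1 = x k 0 * y k 0 * u k 1 := fun k => rfl
  have hv2 : ∀ k, v k 2 = x k 0 * y k 1 * u k 0 := fun k => rfl
  have hv3 : ∀ k, v k 3 = x k 0 * y k 1 * u k 1 := fun k => rfl
  have hv4 : ∀ k, v k 4 = x k 1 * y k 0 * u k 0 := fun k => rfl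
  have hv5 : ∀ k, v k 5 = x k 1 * y k 0 * u k 1 := fun k => rfl
  have hv6 : ∀ k, v k 6 = x k 1 * y k 1 * u k 0 := fun k => rfl
  have hv7 : ∀ k, v k 7 = x k 1 * y k 1 * u k 1 := fun k => rfl
  have hent : ∀ i j : Fin 8, ρ i j = ∑ k, (p k : ℂ) * (v k i * (starRingEnd ℂ) (v k j)) := by
    intro i j
    rw [hρ]
    simp [Matrix.sum_apply, Matrix.smul_apply, proj, smul_eq_mul, Complex.star_def, hvdef]
  have hXentry : ∀ i j : Fin 8, (i = j ∨ i.val + j.val = 7) → ρ i j = XMat a b c i j := by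
    intro i j h
    have h2 := congrFun (congrFun hX i) j
    simp only [Xpart, Matrix.of_apply] at h2
    rwa [if_pos h] at h2
  have hdiag : ∀ i : Fin 8, ρ i i = ((∑ k, p k * Complex.normSq (v k i) : ℝ) : ℂ) := by
    intro i
    rw [hent i i]
    push_cast
    exact Finset.sum_congr rfl fun k _ => by rw [Complex.mul_conj]
  -- diagonal identifications
  have ha0 : a 0 = ∑ k, p k * Complex.normSq (v k 0) := by
    have h := hXentry 0 0 (Or.inl rfl); rw [hdiag 0, show XMat a b c 0 0 = ((a 0 : ℝ) : ℂ) from rfl] at h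
    exact_mod_cast h.symm
  have ha1 : a 1 = ∑ k, p k * Complex.normSq (v k 1) := by
    have h := hXentry 1 1 (Or.inl rfl); rw [hdiag 1, show XMat a b c 1 1 = ((a 1 : ℝ) : ℂ) from rfl] at h
    exact_mod_cast h.symm
  have ha2 : a 2 = ∑ k, p k * Complex.normSq (v k 2) := by
    have h := hXentry 2 2 (Or.inl rfl); rw [hdiag 2, show XMat a b c 2 2 = ((a 2 : ℝ) : ℂ) from rfl] at h
    exact_mod_cast h.symm
  have ha3 : a 3 = ∑ k, p k * Complex.normSq (v k 3) := by
    have h := hXentry 3 3 (Or.inl rfl); rw [hdiag 3, show XMat a b c 3 3 = ((a 3 : ℝ) : ℂ) from rfl] at h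
    exact_mod_cast h.symm
  have hb3 : b 3 = ∑ k, p k * Complex.normSq (v k 4) := by
    have h := hXentry 4 4 (Or.inl rfl); rw [hdiag 4, show XMat a b c 4 4 = ((b 3 : ℝ) : ℂ) from rfl] at h
    exact_mod_cast h.symm
  have hb2 : b 2 = ∑ k, p k * Complex.normSq (v k 5) := by
    have h := hXentry 5 5 (Or.inl rfl); rw [hdiag 5, show XMat a b c 5 5 = ((b 2 : ℝ) : ℂ) from rfl] at h
    exact_mod_cast h.symm
  have hb1 : b 1 = ∑ k, p k * Complex.normSq (v k 6) := by
    have h := hXentry 6 6 (Or.inl rfl); rw [hdiag 6, show XMat a b c 6 6 = ((b 1 : ℝ) : ℂ) from rfl] at h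
    exact_mod_cast h.symm
  have hb0 : b 0 = ∑ k, p k * Complex.normSq (v k 7) := by
    have h := hXentry 7 7 (Or.inl rfl); rw [hdiag 7, show XMat a b c 7 7 = ((b 0 : ℝ) : ℂ) from rfl] at h
    exact_mod_cast h.symm
  -- anti-diagonal identifications
  have hc0 : c 0 = ∑ k, (p k : ℂ) * (v k 0 * (starRingEnd ℂ) (v k 7)) := by
    have h := hXentry 0 7 (Or.inr rfl)
    rw [hent 0 7, show XMat a b c 0 7 = c 0 from rfl] at h; exact h.symm
  have hc1 : c 1 = ∑ k, (p k : ℂ) * (v k 1 * (starRingEnd ℂ) (v k 6)) := by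
    have h := hXentry 1 6 (Or.inr rfl)
    rw [hent 1 6, show XMat a b c 1 6 = c 1 from rfl] at h; exact h.symm
  have hc2 : c 2 = ∑ k, (p k : ℂ) * (v k 2 * (starRingEnd ℂ) (v k 5)) := by
    have h := hXentry 2 5 (Or.inr rfl)
    rw [hent 2 5, show XMat a b c 2 5 = c 2 from rfl] at h; exact h.symm
  have hc3 : c 3 = ∑ k, (p k : ℂ) * (v k 3 * (starRingEnd ℂ) (v k 4)) := by
    have h := hXentry 3 4 (Or.inr rfl)
    rw [hent 3 4, show XMat a b c 3 4 = c 3 from rfl] at h; exact h.symm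
  -- magnitudes
  set m : Fin n → ℝ := fun k =>
    norm (x k 0 * (starRingEnd ℂ) (x k 1)) *
    norm (y k 0 * (starRingEnd ℂ) (y k 1)) *
    norm (u k 0 * (starRingEnd ℂ) (u k 1)) with hmdef
  have hmnn : ∀ k, 0 ≤ m k := fun k =>
    mul_nonneg (mul_nonneg (norm_nonneg _) (norm_nonneg _)) (norm_nonneg _)
  have hm2 : ∀ k, (m k) ^ 2 =
      (Complex.normSq (x k 0) * Complex.normSq (x k 1)) *
      (Complex.normSq (y k 0) * Complex.normSq (y k 1)) *
      (Complex.normSq (u k 0) * Complex.normSq (u k 1)) := by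
    intro k
    simp only [hmdef, mul_pow, Complex.sq_norm, Complex.normSq_mul, Complex.normSq_conj]
  have hnn : ∀ (k : Fin n) (i : Fin 8), 0 ≤ p k * Complex.normSq (v k i) :=
    fun k i => mul_nonneg (hp0 k) (Complex.normSq_nonneg _)
  have hDnn : ∀ i : Fin 8, (0 : ℝ) ≤ ∑ k, p k * Complex.normSq (v k i) :=
    fun i => Finset.sum_nonneg fun k _ => hnn k i
  -- pairing products
  have h07 : ∀ k, Complex.normSq (v k 0) * Complex.normSq (v k 7) = (m k) ^ 2 := by
    intro k; rw [hm2 k, hv0 k, hv7 k]; simp only [Complex.normSq_mul]; ring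
  have h16 : ∀ k, Complex.normSq (v k 1) * Complex.normSq (v k 6) = (m k) ^ 2 := by
    intro k; rw [hm2 k, hv1 k, hv6 k]; simp only [Complex.normSq_mul]; ring
  have h25 : ∀ k, Complex.normSq (v k 2) * Complex.normSq (v k 5) = (m k) ^ 2 := by
    intro k; rw [hm2 k, hv2 k, hv5 k]; simp only [Complex.normSq_mul]; ring
  have h34 : ∀ k, Complex.normSq (v k 3) * Complex.normSq (v k 4) = (m k) ^ 2 := by
    intro k; rw [hm2 k, hv3 k, hv4 k]; simp only [Complex.normSq_mul]; ring
  have hq1 : ∀ k, (Complex.normSq (v k 0) * Complex.normSq (v k 3)) *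
      (Complex.normSq (v k 5) * Complex.normSq (v k 6)) = ((m k) ^ 2) ^ 2 := by
    intro k; rw [hm2 k, hv0 k, hv3 k, hv5 k, hv6 k]; simp only [Complex.normSq_mul]; ring
  have hq2 : ∀ k, (Complex.normSq (v k 1) * Complex.normSq (v k 2)) *
      (Complex.normSq (v k 4) * Complex.normSq (v k 7)) = ((m k) ^ 2) ^ 2 := by
    intro k; rw [hm2 k, hv1 k, hv2 k, hv4 k, hv7 k]; simp only [Complex.normSq_mul]; ring
  -- pair representation of p k * m k
  have hpm : ∀ (k : Fin n) (i j : Fin 8),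
      Complex.normSq (v k i) * Complex.normSq (v k j) = (m k) ^ 2 →
      p k * m k = Real.sqrt ((p k * Complex.normSq (v k i)) * (p k * Complex.normSq (v k j))) := by
    intro k i j hij
    rw [show (p k * Complex.normSq (v k i)) * (p k * Complex.normSq (v k j)) = (p k * m k) ^ 2 from by
      rw [mul_pow, ← hij]; ring, Real.sqrt_sq (mul_nonneg (hp0 k) (hmnn k))]
  -- the six bounds on ∑ p k * m k
  have bound1 : ∑ k, p k * m k ≤ Real.sqrt (a 0 * b 0) := by
    calc ∑ k, p k * m k
        = ∑ k, Real.sqrt ((p k * Complex.normSq (v k 0)) * (p k * Complex.normSq (v k 7))) :=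
          Finset.sum_congr rfl fun k _ => hpm k 0 7 (h07 k)
      _ ≤ Real.sqrt ((∑ k, p k * Complex.normSq (v k 0)) * (∑ k, p k * Complex.normSq (v k 7))) :=
          cs_sum _ _ (fun k => hnn k 0) (fun k => hnn k 7)
      _ = Real.sqrt (a 0 * b 0) := by rw [← ha0, ← hb0]
  have bound2 : ∑ k, p k * m k ≤ Real.sqrt (a 1 * b 1) := by
    calc ∑ k, p k * m k
        = ∑ k, Real.sqrt ((p k * Complex.normSq (v k 1)) * (p k * Complex.normSq (v k 6))) :=
          Finset.sum_congr rfl fun k _ => hpm k 1 6 (h16 k)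
      _ ≤ Real.sqrt ((∑ k, p k * Complex.normSq (v k 1)) * (∑ k, p k * Complex.normSq (v k 6))) :=
          cs_sum _ _ (fun k => hnn k 1) (fun k => hnn k 6)
      _ = Real.sqrt (a 1 * b 1) := by rw [← ha1, ← hb1]
  have bound3 : ∑ k, p k * m k ≤ Real.sqrt (a 2 * b 2) := by
    calc ∑ k, p k * m k
        = ∑ k, Real.sqrt ((p k * Complex.normSq (v k 2)) * (p k * Complex.normSq (v k 5))) :=
          Finset.sum_congr rfl fun k _ => hpm k 2 5 (h25 k)
      _ ≤ Real.sqrt ((∑ k, p k * Complex.normSq (v k 2)) * (∑ k, p k * Complex.normSq (v k 5))) :=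
          cs_sum _ _ (fun k => hnn k 2) (fun k => hnn k 5)
      _ = Real.sqrt (a 2 * b 2) := by rw [← ha2, ← hb2]
  have bound4 : ∑ k, p k * m k ≤ Real.sqrt (a 3 * b 3) := by
    calc ∑ k, p k * m k
        = ∑ k, Real.sqrt ((p k * Complex.normSq (v k 3)) * (p k * Complex.normSq (v k 4))) :=
          Finset.sum_congr rfl fun k _ => hpm k 3 4 (h34 k)
      _ ≤ Real.sqrt ((∑ k, p k * Complex.normSq (v k 3)) * (∑ k, p k * Complex.normSq (v k 4))) :=
          cs_sum _ _ (fun k => hnn k 3) (fun k => hnn k 4)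
      _ = Real.sqrt (a 3 * b 3) := by rw [← ha3, ← hb3]
  -- quartic bounds
  have quartic : ∀ (i1 i2 i3 i4 : Fin 8),
      (∀ k, (Complex.normSq (v k i1) * Complex.normSq (v k i2)) *
        (Complex.normSq (v k i3) * Complex.normSq (v k i4)) = ((m k) ^ 2) ^ 2) →
      ∑ k, p k * m k ≤ Real.sqrt (Real.sqrt
        ((∑ k, p k * Complex.normSq (v k i1)) * (∑ k, p k * Complex.normSq (v k i2)) *
         ((∑ k, p k * Complex.normSq (v k i3)) * (∑ k, p k * Complex.normSq (v k i4))))) := by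
    intro i1 i2 i3 i4 hq
    set F : Fin n → ℝ := fun k =>
      Real.sqrt ((p k * Complex.normSq (v k i1)) * (p k * Complex.normSq (v k i2))) with hF
    set G : Fin n → ℝ := fun k =>
      Real.sqrt ((p k * Complex.normSq (v k i3)) * (p k * Complex.normSq (v k i4))) with hG
    have hFG : ∀ k, p k * m k = Real.sqrt (F k * G k) := by
      intro k
      have hA : (0:ℝ) ≤ (p k * Complex.normSq (v k i1)) * (p k * Complex.normSq (v k i2)) :=
        mul_nonneg (hnn k i1) (hnn k i2)
      have h1 : F k * G k = (p k * m k) ^ 2 := by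
        rw [hF, hG]
        simp only
        rw [← Real.sqrt_mul hA]
        rw [show (p k * Complex.normSq (v k i1)) * (p k * Complex.normSq (v k i2)) *
            ((p k * Complex.normSq (v k i3)) * (p k * Complex.normSq (v k i4))) =
            ((p k * m k) ^ 2) ^ 2 from by
          rw [mul_pow, mul_pow, ← hq k]; ring]
        exact Real.sqrt_sq (sq_nonneg _)
      rw [h1, Real.sqrt_sq (mul_nonneg (hp0 k) (hmnn k))]
    calc ∑ k, p k * m k = ∑ k, Real.sqrt (F k * G k) := Finset.sum_congr rfl fun k _ => hFG k
      _ ≤ Real.sqrt ((∑ k, F k) * (∑ k, G k)) :=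
          cs_sum _ _ (fun k => Real.sqrt_nonneg _) (fun k => Real.sqrt_nonneg _)
      _ ≤ Real.sqrt (Real.sqrt ((∑ k, p k * Complex.normSq (v k i1)) * (∑ k, p k * Complex.normSq (v k i2))) *
            Real.sqrt ((∑ k, p k * Complex.normSq (v k i3)) * (∑ k, p k * Complex.normSq (v k i4)))) := by
          apply Real.sqrt_le_sqrt
          apply mul_le_mul (cs_sum _ _ (fun k => hnn k i1) (fun k => hnn k i2))
            (cs_sum _ _ (fun k => hnn k i3) (fun k => hnn k i4))
            (Finset.sum_nonneg fun k _ => Real.sqrt_nonneg _) (Real.sqrt_nonneg _)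
      _ = _ := by rw [← Real.sqrt_mul (mul_nonneg (hDnn i1) (hDnn i2))]
  have bound5 : ∑ k, p k * m k ≤ Real.sqrt (Real.sqrt (a 0 * b 1 * b 2 * a 3)) := by
    have h := quartic 0 3 5 6 hq1
    calc ∑ k, p k * m k ≤ _ := h
      _ = Real.sqrt (Real.sqrt (a 0 * b 1 * b 2 * a 3)) := by
          rw [← ha0, ← ha3, ← hb2, ← hb1,
            show a 0 * a 3 * (b 2 * b 1) = a 0 * b 1 * b 2 * a 3 from by ring]
  have bound6 : ∑ k, p k * m k ≤ Real.sqrt (Real.sqrt (b 0 * a 1 * a 2 * b 3)) := by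
    have h := quartic 1 2 4 7 hq2
    calc ∑ k, p k * m k ≤ _ := h
      _ = Real.sqrt (Real.sqrt (b 0 * a 1 * a 2 * b 3)) := by
          rw [← ha1, ← ha2, ← hb3, ← hb0,
            show a 1 * a 2 * (b 3 * b 0) = b 0 * a 1 * a 2 * b 3 from by ring]
  -- the L part
  have hL : Lfun c z = ∑ k, p k *
      (z 0 * (v k 0 * (starRingEnd ℂ) (v k 7)) + z 1 * (v k 1 * (starRingEnd ℂ) (v k 6)) +
       z 2 * (v k 2 * (starRingEnd ℂ) (v k 5)) + z 3 * ((starRingEnd ℂ) (v k 3) * v k 4)).re := by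
    unfold Lfun
    rw [hc0, hc1, hc2, hc3]
    rw [show z 0 * (∑ k, (p k : ℂ) * (v k 0 * (starRingEnd ℂ) (v k 7))) +
        z 1 * (∑ k, (p k : ℂ) * (v k 1 * (starRingEnd ℂ) (v k 6))) +
        z 2 * (∑ k, (p k : ℂ) * (v k 2 * (starRingEnd ℂ) (v k 5))) +
        z 3 * star (∑ k, (p k : ℂ) * (v k 3 * (starRingEnd ℂ) (v k 4))) =
        ∑ k, (p k : ℂ) *
          (z 0 * (v k 0 * (starRingEnd ℂ) (v k 7)) + z 1 * (v k 1 * (starRingEnd ℂ) (v k 6)) +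
           z 2 * (v k 2 * (starRingEnd ℂ) (v k 5)) + z 3 * ((starRingEnd ℂ) (v k 3) * v k 4)) from by
      rw [star_sum]
      simp only [Finset.mul_sum, ← Finset.sum_add_distrib]
      refine Finset.sum_congr rfl fun k _ => ?_
      simp only [star_mul', Complex.star_def, map_mul, Complex.conj_conj, Complex.conj_ofReal]
      ring]
    rw [Complex.re_sum]
    exact Finset.sum_congr rfl fun k _ => by rw [Complex.re_ofReal_mul]
  have hterm : ∀ k, (z 0 * (v k 0 * (starRingEnd ℂ) (v k 7)) + z 1 * (v k 1 * (starRingEnd ℂ) (v k 6)) +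
       z 2 * (v k 2 * (starRingEnd ℂ) (v k 5)) + z 3 * ((starRingEnd ℂ) (v k 3) * v k 4)).re
       ≤ Cfun z * m k := by
    intro k
    have h := key_s7 z (x k 0 * (starRingEnd ℂ) (x k 1)) (y k 0 * (starRingEnd ℂ) (y k 1))
      (u k 0 * (starRingEnd ℂ) (u k 1))
    have e : z 0 * (v k 0 * (starRingEnd ℂ) (v k 7)) + z 1 * (v k 1 * (starRingEnd ℂ) (v k 6)) +
       z 2 * (v k 2 * (starRingEnd ℂ) (v k 5)) + z 3 * ((starRingEnd ℂ) (v k 3) * v k 4) =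
       z 0 * ((x k 0 * (starRingEnd ℂ) (x k 1)) * (y k 0 * (starRingEnd ℂ) (y k 1)) *
              (u k 0 * (starRingEnd ℂ) (u k 1))) +
       z 1 * ((x k 0 * (starRingEnd ℂ) (x k 1)) * (y k 0 * (starRingEnd ℂ) (y k 1)) *
              (starRingEnd ℂ) (u k 0 * (starRingEnd ℂ) (u k 1))) +
       z 2 * ((x k 0 * (starRingEnd ℂ) (x k 1)) * (starRingEnd ℂ) (y k 0 * (starRingEnd ℂ) (y k 1)) *
              (u k 0 * (starRingEnd ℂ) (u k 1))) +
       z 3 * ((starRingEnd ℂ) (x k 0 * (starRingEnd ℂ) (x k 1)) * (y k 0 * (starRingEnd ℂ) (y k 1)) *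
              (u k 0 * (starRingEnd ℂ) (u k 1))) := by
      rw [hv0 k, hv1 k, hv2 k, hv3 k, hv4 k, hv5 k, hv6 k, hv7 k]
      simp only [map_mul, Complex.conj_conj]
      ring
    rw [e]
    exact h
  have hLB : Lfun c z ≤ Cfun z * ∑ k, p k * m k := by
    rw [hL]
    calc ∑ k, p k * _ ≤ ∑ k, p k * (Cfun z * m k) :=
          Finset.sum_le_sum fun k _ => mul_le_mul_of_nonneg_left (hterm k) (hp0 k)
      _ = Cfun z * ∑ k, p k * m k := by
          rw [Finset.mul_sum]; exact Finset.sum_congr rfl fun k _ => by ring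
  refine le_trans hLB (mul_le_mul_of_nonneg_left ?_ (cfun_nonneg z))
  exact le_min (le_min (le_min bound1 bound2) (le_min bound3 bound4)) (le_min bound5 bound6)

end
end

section
/- Let z ∈ ℝ⁴ be nonzero with z₁z₂z₃z₄ ≥ 0. Then C(z) = |z₁| + |z₂| + |z₃| + |z₄|. -/
open scoped ComplexOrder Matrix

noncomputable section

lemma key_re (w θ : ℝ) : ((w : ℂ) * Complex.exp ((θ:ℂ) * Complex.I)).re = w * Real.cos θ := by
  simp [Complex.mul_re, Complex.exp_ofReal_mul_I_re, Complex.exp_ofReal_mul_I_im]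

lemma exists_signs (z : Fin 4 → ℝ) (h : 0 ≤ z 0 * z 1 * z 2 * z 3) :
    ∃ s1 s2 s3 : ℝ, (s1 = 1 ∨ s1 = -1) ∧ (s2 = 1 ∨ s2 = -1) ∧ (s3 = 1 ∨ s3 = -1) ∧
      s1 * s2 * s3 * z 0 = |z 0| ∧ s1 * z 1 = |z 1| ∧ s2 * z 2 = |z 2| ∧ s3 * z 3 = |z 3| := by
  set t : Fin 4 → ℝ := fun i => if 0 ≤ z i then 1 else -1 with ht_def
  have ht : ∀ i, t i * z i = |z i| := by
    intro i
    by_cases hi : 0 ≤ z i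
    · simp [ht_def, hi, abs_of_nonneg hi]
    · push_neg at hi
      simp [ht_def, not_le.mpr hi, abs_of_neg hi]
  have htpm : ∀ i, t i = 1 ∨ t i = -1 := by
    intro i; by_cases hi : 0 ≤ z i <;> simp [ht_def, hi]
  have hsq : ∀ i, t i * t i = 1 := by
    intro i; rcases htpm i with h|h <;> rw [h] <;> norm_num
  by_cases h0 : z 0 = 0
  · exact ⟨t 1, t 2, t 3, htpm 1, htpm 2, htpm 3, by simp [h0], ht 1, ht 2, ht 3⟩
  by_cases h1 : z 1 = 0
  · refine ⟨t 0 * t 2 * t 3, t 2, t 3, ?_, htpm 2, htpm 3, ?_, by simp [h1], ht 2, ht 3⟩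
    · rcases htpm 0 with a|a <;> rcases htpm 2 with b|b <;> rcases htpm 3 with c|c <;>
        rw [a, b, c] <;> norm_num
    · linear_combination t 0 * z 0 * t 2 * t 2 * hsq 3 + t 0 * z 0 * hsq 2 + ht 0
  by_cases h2 : z 2 = 0
  · refine ⟨t 1, t 0 * t 1 * t 3, t 3, htpm 1, ?_, htpm 3, ?_, ht 1, by simp [h2], ht 3⟩
    · rcases htpm 0 with a|a <;> rcases htpm 1 with b|b <;> rcases htpm 3 with c|c <;>
        rw [a, b, c] <;> norm_num
    · linear_combination t 0 * z 0 * t 1 * t 1 * hsq 3 + t 0 * z 0 * hsq 1 + ht 0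
  by_cases h3 : z 3 = 0
  · refine ⟨t 1, t 2, t 0 * t 1 * t 2, htpm 1, htpm 2, ?_, ?_, ht 1, ht 2, by simp [h3]⟩
    · rcases htpm 0 with a|a <;> rcases htpm 1 with b|b <;> rcases htpm 2 with c|c <;>
        rw [a, b, c] <;> norm_num
    · linear_combination t 0 * z 0 * t 1 * t 1 * hsq 2 + t 0 * z 0 * hsq 1 + ht 0
  · refine ⟨t 1, t 2, t 3, htpm 1, htpm 2, htpm 3, ?_, ht 1, ht 2, ht 3⟩
    have hP : z 0 * z 1 * z 2 * z 3 ≠ 0 := by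
      simp [h0, h1, h2, h3]
    have hprod : t 0 * t 1 * t 2 * t 3 = 1 := by
      have key : (t 0 * t 1 * t 2 * t 3) * (z 0 * z 1 * z 2 * z 3)
          = 1 * (z 0 * z 1 * z 2 * z 3) := by
        have : (t 0 * z 0) * (t 1 * z 1) * (t 2 * z 2) * (t 3 * z 3)
            = |z 0| * |z 1| * |z 2| * |z 3| := by rw [ht 0, ht 1, ht 2, ht 3]
        calc (t 0 * t 1 * t 2 * t 3) * (z 0 * z 1 * z 2 * z 3)
            = (t 0 * z 0) * (t 1 * z 1) * (t 2 * z 2) * (t 3 * z 3) := by ring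
          _ = |z 0| * |z 1| * |z 2| * |z 3| := this
          _ = |z 0 * z 1 * z 2 * z 3| := by rw [abs_mul, abs_mul, abs_mul]
          _ = 1 * (z 0 * z 1 * z 2 * z 3) := by rw [abs_of_nonneg h, one_mul]
      exact mul_right_cancel₀ hP key
    linear_combination z 0 * t 0 * hprod - z 0 * t 1 * t 2 * t 3 * hsq 0 + ht 0

/-- if `z ≠ 0` and `z₁z₂z₃z₄ ≥ 0` then
`C(z) = |z₁| + |z₂| + |z₃| + |z₄|`. -/
theorem stmt10 (z : Fin 4 → ℝ) (hz : z ≠ 0) (h : 0 ≤ z 0 * z 1 * z 2 * z 3) :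
    Cfun (fun i => (z i : ℂ)) = |z 0| + |z 1| + |z 2| + |z 3| := by
  obtain ⟨s1, s2, s3, hp1, hp2, hp3, e0, e1, e2, e3⟩ := exists_signs z h
  have angle : ∀ s : ℝ, (s = 1 ∨ s = -1) → ∃ a : ℝ, Real.cos a = s ∧ Real.sin a = 0 := by
    rintro s (rfl|rfl)
    · exact ⟨0, by simp⟩
    · exact ⟨Real.pi, by simp⟩
  obtain ⟨a1, hc1, hs1⟩ := angle s1 hp1
  obtain ⟨a2, hc2, hs2⟩ := angle s2 hp2
  obtain ⟨a3, hc3, hs3⟩ := angle s3 hp3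
  have hcsum : Real.cos (a1 + a2 + a3) = s1 * s2 * s3 := by
    rw [Real.cos_add, Real.cos_add, Real.sin_add, hc1, hc2, hc3, hs1, hs2, hs3]; ring
  set f : ℝ × ℝ × ℝ → ℝ := fun p =>
    |((z 0 : ℂ) * Complex.exp (((p.1 + p.2.1 + p.2.2 : ℝ) : ℂ) * Complex.I)).re +
     ((z 1 : ℂ) * Complex.exp (((p.1 : ℝ) : ℂ) * Complex.I)).re +
     ((z 2 : ℂ) * Complex.exp (((p.2.1 : ℝ) : ℂ) * Complex.I)).re +
     ((z 3 : ℂ) * Complex.exp (((p.2.2 : ℝ) : ℂ) * Complex.I)).re| with hf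
  have hfun : Cfun (fun i => (z i : ℂ)) = ⨆ p, f p := rfl
  have hval : ∀ p : ℝ × ℝ × ℝ, f p =
      |z 0 * Real.cos (p.1 + p.2.1 + p.2.2) + z 1 * Real.cos p.1 + z 2 * Real.cos p.2.1 +
       z 3 * Real.cos p.2.2| := by
    intro p; simp only [hf, key_re]
  have keyb : ∀ (w θ : ℝ), |w * Real.cos θ| ≤ |w| := fun w θ => by
    rw [abs_mul]; exact mul_le_of_le_one_right (abs_nonneg w) (Real.abs_cos_le_one θ)
  have hub : ∀ p, f p ≤ |z 0| + |z 1| + |z 2| + |z 3| := by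
    intro p
    rw [hval p]
    have k0 := abs_le.mp (keyb (z 0) (p.1 + p.2.1 + p.2.2))
    have k1 := abs_le.mp (keyb (z 1) p.1)
    have k2 := abs_le.mp (keyb (z 2) p.2.1)
    have k3 := abs_le.mp (keyb (z 3) p.2.2)
    rw [abs_le]
    constructor <;> [linarith [k0.1, k1.1, k2.1, k3.1]; linarith [k0.2, k1.2, k2.2, k3.2]]
  rw [hfun]
  apply le_antisymm
  · exact ciSup_le hub
  · have hbdd : BddAbove (Set.range f) := ⟨_, by rintro x ⟨p, rfl⟩; exact hub p⟩
    refine le_ciSup_of_le hbdd (a1, a2, a3) ?_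
    rw [hval]
    have : z 0 * Real.cos (a1 + a2 + a3) + z 1 * Real.cos a1 + z 2 * Real.cos a2 +
        z 3 * Real.cos a3 = |z 0| + |z 1| + |z 2| + |z 3| := by
      rw [hcsum, hc1, hc2, hc3]
      linear_combination e0 + e1 + e2 + e3
    rw [this]; exact le_abs_self _


end
end

section
/- Let z ∈ ℝ⁴ with z₁z₂z₃z₄ < 0 and suppose that for some i ∈ {1,2,3,4} one has 1/|z_i| ≥ Σ_{j≠i} 1/|z_j|. Then C(z) = |z₁| + |z₂| + |z₃| + |z₄| − 2|z_i|. -/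
open scoped ComplexOrder Matrix

noncomputable section

open Real

lemma abs_sin_add (a b : ℝ) : |Real.sin (a+b)| ≤ |Real.sin a| + |Real.sin b| := by
  rw [Real.sin_add]
  calc |sin a * cos b + cos a * sin b| ≤ |sin a * cos b| + |cos a * sin b| := abs_add_le _ _
    _ ≤ |sin a| + |sin b| := by
        rw [abs_mul, abs_mul]
        have h1 := Real.abs_cos_le_one b
        have h2 := Real.abs_cos_le_one a
        have h3 := abs_nonneg (sin a)
        have h4 := abs_nonneg (sin b)
        nlinarith

lemma cs3 (p q r : ℝ) (hp : 0 < p) (hq : 0 < q) (hr : 0 < r)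
    (h : 1/p + 1/q + 1/r ≤ 1) (u v w : ℝ) :
    Real.sin (u + v + w) ^ 2 ≤ p * Real.sin u ^ 2 + q * Real.sin v ^ 2 + r * Real.sin w ^ 2 := by
  have habs : |Real.sin (u+v+w)| ≤ |Real.sin u| + |Real.sin v| + |Real.sin w| := by
    calc |Real.sin (u+v+w)| ≤ |Real.sin (u+v)| + |Real.sin w| := abs_sin_add (u+v) w
      _ ≤ |Real.sin u| + |Real.sin v| + |Real.sin w| := by linarith [abs_sin_add u v]
  set s := |Real.sin u| with hs
  set t := |Real.sin v| with ht
  set x := |Real.sin w| with hx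
  have hs2 : s^2 = Real.sin u ^2 := sq_abs _
  have ht2 : t^2 = Real.sin v ^2 := sq_abs _
  have hx2 : x^2 = Real.sin w ^2 := sq_abs _
  have h0 : Real.sin (u+v+w)^2 ≤ (s+t+x)^2 := by
    rw [← sq_abs]
    have : (0:ℝ) ≤ s+t+x := by positivity
    nlinarith [abs_nonneg (Real.sin (u+v+w))]
  -- CS: (s+t+x)^2 ≤ (p s² + q t² + r x²) (1/p+1/q+1/r) ≤ p s² + q t² + r x²
  have hpqr : (0:ℝ) < p*q*r := by positivity
  have hmul : q*r + p*r + p*q ≤ p*q*r := by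
    have e : p*q*r*(1/p+1/q+1/r) = q*r+p*r+p*q := by field_simp
    have := mul_le_mul_of_nonneg_left h hpqr.le
    rw [e, mul_one] at this
    exact this
  have hcs : p*q*r*(s+t+x)^2 ≤ (p*s^2 + q*t^2 + r*x^2) * (q*r + p*r + p*q) := by
    have key : (p*s^2 + q*t^2 + r*x^2) * (q*r + p*r + p*q) - p*q*r*(s+t+x)^2 =
        r*(p*s - q*t)^2 + q*(p*s - r*x)^2 + p*(q*t - r*x)^2 := by ring
    linarith [mul_nonneg hr.le (sq_nonneg (p*s - q*t)), mul_nonneg hq.le (sq_nonneg (p*s - r*x)),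
      mul_nonneg hp.le (sq_nonneg (q*t - r*x)), key]
  have hnn : (0:ℝ) ≤ p*s^2 + q*t^2 + r*x^2 := by positivity
  have h2 : (p*s^2+q*t^2+r*x^2) * (q*r+p*r+p*q) ≤ (p*s^2+q*t^2+r*x^2) * (p*q*r) :=
    mul_le_mul_of_nonneg_left hmul hnn
  have h3 : p*q*r*(s+t+x)^2 ≤ p*q*r*(p*s^2+q*t^2+r*x^2) := by linarith
  have h4 : (s+t+x)^2 ≤ p*s^2+q*t^2+r*x^2 := le_of_mul_le_mul_left h3 hpqr
  rw [← hs2, ← ht2, ← hx2]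
  linarith

-- sin(y + (2m+1)π/2)² = cos y²
lemma sin_sq_shift (y : ℝ) (m : ℤ) :
    Real.sin (y + (2*(m:ℝ)+1)*(π/2)) ^ 2 = Real.cos y ^ 2 := by
  have e : y + (2*(m:ℝ)+1)*(π/2) = (y + π/2) + (m:ℝ)*π := by ring
  rw [e, Real.sin_add, Real.sin_int_mul_pi, mul_zero, add_zero]
  have hc : Real.cos ((m:ℝ)*π) ^ 2 = 1 := by
    have := Real.sin_sq_add_cos_sq ((m:ℝ)*π)
    rw [Real.sin_int_mul_pi] at this
    nlinarith
  rw [mul_pow, hc, mul_one, Real.sin_add_pi_div_two]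

lemma key0 (a0 a1 a2 a3 : ℝ) (h0 : 0 < a0) (h1 : 0 < a1) (h2 : 0 < a2) (h3 : 0 < a3)
    (hd : a0/a1 + a0/a2 + a0/a3 ≤ 1) (x0 x1 x2 x3 : ℝ) (m : ℤ)
    (hx : x0 = x1 + x2 + x3 + (2*(m:ℝ)+1)*(π/2)) :
    a0 ≤ a0 * Real.sin x0 ^ 2 + a1 * Real.sin x1 ^ 2 + a2 * Real.sin x2 ^ 2
      + a3 * Real.sin x3 ^ 2 := by
  have hs : Real.sin x0 ^ 2 = Real.cos (x1+x2+x3) ^ 2 := by rw [hx]; exact sin_sq_shift _ m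
  have hcs : Real.sin (x1+x2+x3) ^ 2 ≤ (a1/a0) * Real.sin x1 ^ 2 + (a2/a0) * Real.sin x2 ^ 2
      + (a3/a0) * Real.sin x3 ^ 2 := by
    apply cs3 _ _ _ (by positivity) (by positivity) (by positivity)
    rw [one_div_div, one_div_div, one_div_div]; exact hd
  have hpy := Real.sin_sq_add_cos_sq (x1+x2+x3)
  have e1 : a0 * ((a1/a0) * Real.sin x1 ^ 2) = a1 * Real.sin x1 ^ 2 := by field_simp
  have e2 : a0 * ((a2/a0) * Real.sin x2 ^ 2) = a2 * Real.sin x2 ^ 2 := by field_simp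
  have e3 : a0 * ((a3/a0) * Real.sin x3 ^ 2) = a3 * Real.sin x3 ^ 2 := by field_simp
  have := mul_le_mul_of_nonneg_left hcs h0.le
  rw [hs]
  nlinarith [this]

lemma stepA (c : ℝ) (hc : c ≠ 0) (θ : ℝ) :
    c * Real.cos θ = |c| - 2 * |c| * Real.sin ((θ + (if c < 0 then π else 0))/2) ^ 2 := by
  have hid : ∀ t : ℝ, Real.cos t = 1 - 2 * Real.sin (t/2) ^ 2 := by
    intro t
    have h1 : Real.cos t = Real.cos (2*(t/2)) := by ring_nf
    rw [h1, Real.cos_two_mul]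
    have := Real.sin_sq_add_cos_sq (t/2)
    nlinarith
  by_cases hneg : c < 0
  · simp only [if_pos hneg]
    rw [abs_of_neg hneg]
    have e : (θ + π)/2 = θ/2 + π/2 := by ring
    rw [e, Real.sin_add_pi_div_two]
    have := Real.sin_sq_add_cos_sq (θ/2)
    rw [hid θ]
    nlinarith
  · have hpos : 0 < c := lt_of_le_of_ne (not_lt.mp hneg) (Ne.symm hc)
    simp only [if_neg hneg, add_zero]
    rw [abs_of_pos hpos, hid θ]
    ring

lemma sgn_mul (c : ℝ) (hc : c ≠ 0) : (if c < 0 then (-1:ℝ) else 1) * c = |c| := by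
  split
  · rw [abs_of_neg (by assumption)]; ring
  · rw [abs_of_nonneg (not_lt.mp (by assumption))]; ring

lemma signProd (z : Fin 4 → ℝ) (h : z 0 * z 1 * z 2 * z 3 < 0) :
    (if z 0 < 0 then (-1:ℝ) else 1) * (if z 1 < 0 then (-1:ℝ) else 1) *
    (if z 2 < 0 then (-1:ℝ) else 1) * (if z 3 < 0 then (-1:ℝ) else 1) = -1 := by
  have hne0 : z 0 ≠ 0 := by intro e; rw [e] at h; simp at h
  have hne1 : z 1 ≠ 0 := by intro e; rw [e] at h; simp at h
  have hne2 : z 2 ≠ 0 := by intro e; rw [e] at h; simp at h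
  have hne3 : z 3 ≠ 0 := by intro e; rw [e] at h; simp at h
  set S := (if z 0 < 0 then (-1:ℝ) else 1) * (if z 1 < 0 then (-1:ℝ) else 1) *
    (if z 2 < 0 then (-1:ℝ) else 1) * (if z 3 < 0 then (-1:ℝ) else 1) with hS
  have habs : |S| = 1 := by
    rw [hS, abs_mul, abs_mul, abs_mul]
    have : ∀ c : ℝ, |if c < 0 then (-1:ℝ) else 1| = 1 := by
      intro c; split <;> norm_num
    rw [this, this, this, this]; norm_num
  have hSP : S * (z 0 * z 1 * z 2 * z 3) = |z 0| * |z 1| * |z 2| * |z 3| := by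
    rw [hS]
    rw [show (if z 0 < 0 then (-1:ℝ) else 1) * (if z 1 < 0 then (-1:ℝ) else 1) *
      (if z 2 < 0 then (-1:ℝ) else 1) * (if z 3 < 0 then (-1:ℝ) else 1) *
      (z 0 * z 1 * z 2 * z 3) =
      ((if z 0 < 0 then (-1:ℝ) else 1) * z 0) * ((if z 1 < 0 then (-1:ℝ) else 1) * z 1) *
      ((if z 2 < 0 then (-1:ℝ) else 1) * z 2) * ((if z 3 < 0 then (-1:ℝ) else 1) * z 3) from
      by ring]
    rw [sgn_mul _ hne0, sgn_mul _ hne1, sgn_mul _ hne2, sgn_mul _ hne3]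
  have hpos : 0 < |z 0| * |z 1| * |z 2| * |z 3| := by
    positivity
  have hSneg : S < 0 := by
    by_contra hS0
    push_neg at hS0
    nlinarith
  have := abs_of_neg hSneg
  linarith [habs, this]

lemma stepB (z : Fin 4 → ℝ) (h : z 0 * z 1 * z 2 * z 3 < 0) :
    ∃ m : ℤ, (if z 0 < 0 then π else 0) = (if z 1 < 0 then π else 0) +
      (if z 2 < 0 then π else 0) + (if z 3 < 0 then π else 0) + (2*(m:ℝ)+1)*π := by
  have hs := signProd z h
  by_cases h0 : z 0 < 0 <;> by_cases h1 : z 1 < 0 <;> by_cases h2 : z 2 < 0 <;>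
    by_cases h3 : z 3 < 0 <;>
    simp only [h0, h1, h2, h3, if_true, if_false] at hs ⊢ <;>
    first
      | (refine ⟨0, ?_⟩; push_cast; ring1)
      | (refine ⟨-1, ?_⟩; push_cast; ring1)
      | (refine ⟨-2, ?_⟩; push_cast; ring1)
      | (norm_num at hs)

lemma dom_aux (a b c d : ℝ) (ha : 0 < a) (hb : 0 < b) (hc : 0 < c) (hd : 0 < d)
    (h : b⁻¹ + c⁻¹ + d⁻¹ ≤ a⁻¹) : a/b + a/c + a/d ≤ 1 := by
  have := mul_le_mul_of_nonneg_left h ha.le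
  rw [mul_inv_cancel₀ ha.ne'] at this
  calc a/b + a/c + a/d = a * (b⁻¹ + c⁻¹ + d⁻¹) := by field_simp
    _ ≤ 1 := this

lemma ub (z : Fin 4 → ℝ) (h : z 0 * z 1 * z 2 * z 3 < 0) (i : Fin 4)
    (hi : ∑ j ∈ Finset.univ.erase i, (|z j|)⁻¹ ≤ (|z i|)⁻¹) (α β γ : ℝ) :
    z 0 * Real.cos (α+β+γ) + z 1 * Real.cos α + z 2 * Real.cos β + z 3 * Real.cos γ ≤
      |z 0| + |z 1| + |z 2| + |z 3| - 2 * |z i| := by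
  have hne0 : z 0 ≠ 0 := by intro e; rw [e] at h; simp at h
  have hne1 : z 1 ≠ 0 := by intro e; rw [e] at h; simp at h
  have hne2 : z 2 ≠ 0 := by intro e; rw [e] at h; simp at h
  have hne3 : z 3 ≠ 0 := by intro e; rw [e] at h; simp at h
  have ha0 : 0 < |z 0| := abs_pos.mpr hne0
  have ha1 : 0 < |z 1| := abs_pos.mpr hne1
  have ha2 : 0 < |z 2| := abs_pos.mpr hne2
  have ha3 : 0 < |z 3| := abs_pos.mpr hne3
  obtain ⟨m, hm⟩ := stepB z h
  have e0 := stepA (z 0) hne0 (α+β+γ)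
  have e1 := stepA (z 1) hne1 α
  have e2 := stepA (z 2) hne2 β
  have e3 := stepA (z 3) hne3 γ
  set y0 := ((α+β+γ) + (if z 0 < 0 then π else 0))/2 with hy0
  set y1 := (α + (if z 1 < 0 then π else 0))/2 with hy1
  set y2 := (β + (if z 2 < 0 then π else 0))/2 with hy2
  set y3 := (γ + (if z 3 < 0 then π else 0))/2 with hy3
  have hy : y0 = y1 + y2 + y3 + (2*(m:ℝ)+1)*(π/2) := by
    rw [hy0, hy1, hy2, hy3]; linarith [hm]
  suffices hkey : |z i| ≤ |z 0| * Real.sin y0 ^ 2 + |z 1| * Real.sin y1 ^ 2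
      + |z 2| * Real.sin y2 ^ 2 + |z 3| * Real.sin y3 ^ 2 by
    rw [e0, e1, e2, e3]; linarith
  have hsneg : ∀ t : ℝ, Real.sin (-t) ^ 2 = Real.sin t ^ 2 := by
    intro t; rw [Real.sin_neg]; ring
  have hi4 : i = 0 ∨ i = 1 ∨ i = 2 ∨ i = 3 := by fin_cases i <;> decide
  rcases hi4 with rfl | rfl | rfl | rfl
  · -- i = 0
    rw [show (Finset.univ.erase (0:Fin 4)) = {1,2,3} from by decide,
      Finset.sum_insert (by decide), Finset.sum_insert (by decide),
      Finset.sum_singleton] at hi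
    have hd := dom_aux _ _ _ _ ha0 ha1 ha2 ha3 (by linarith)
    exact key0 _ _ _ _ ha0 ha1 ha2 ha3 hd y0 y1 y2 y3 m hy
  · -- i = 1
    rw [show (Finset.univ.erase (1:Fin 4)) = {0,2,3} from by decide,
      Finset.sum_insert (by decide), Finset.sum_insert (by decide),
      Finset.sum_singleton] at hi
    have hd := dom_aux _ _ _ _ ha1 ha0 ha2 ha3 (by linarith)
    have hx : y1 = y0 + (-y2) + (-y3) + (2*((-m-1 : ℤ):ℝ)+1)*(π/2) := by
      push_cast; linarith [hy]
    have := key0 _ _ _ _ ha1 ha0 ha2 ha3 hd y1 y0 (-y2) (-y3) (-m-1) hx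
    rw [hsneg, hsneg] at this
    linarith
  · -- i = 2
    rw [show (Finset.univ.erase (2:Fin 4)) = {0,1,3} from by decide,
      Finset.sum_insert (by decide), Finset.sum_insert (by decide),
      Finset.sum_singleton] at hi
    have hd := dom_aux _ _ _ _ ha2 ha0 ha1 ha3 (by linarith)
    have hx : y2 = y0 + (-y1) + (-y3) + (2*((-m-1 : ℤ):ℝ)+1)*(π/2) := by
      push_cast; linarith [hy]
    have := key0 _ _ _ _ ha2 ha0 ha1 ha3 hd y2 y0 (-y1) (-y3) (-m-1) hx
    rw [hsneg, hsneg] at this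
    linarith
  · -- i = 3
    rw [show (Finset.univ.erase (3:Fin 4)) = {0,1,2} from by decide,
      Finset.sum_insert (by decide), Finset.sum_insert (by decide),
      Finset.sum_singleton] at hi
    have hd := dom_aux _ _ _ _ ha3 ha0 ha1 ha2 (by linarith)
    have hx : y3 = y0 + (-y1) + (-y2) + (2*((-m-1 : ℤ):ℝ)+1)*(π/2) := by
      push_cast; linarith [hy]
    have := key0 _ _ _ _ ha3 ha0 ha1 ha2 hd y3 y0 (-y1) (-y2) (-m-1) hx
    rw [hsneg, hsneg] at this
    linarith

/-- if `z₁z₂z₃z₄ < 0` and `1/|zᵢ| ≥ Σ_{j≠i} 1/|z_j|` for some `i`,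
then `C(z) = |z₁| + |z₂| + |z₃| + |z₄| − 2|zᵢ|`. -/
theorem stmt11 (z : Fin 4 → ℝ) (h : z 0 * z 1 * z 2 * z 3 < 0) (i : Fin 4)
    (hi : ∑ j ∈ Finset.univ.erase i, (|z j|)⁻¹ ≤ (|z i|)⁻¹) :
    Cfun (fun j => (z j : ℂ)) = |z 0| + |z 1| + |z 2| + |z 3| - 2 * |z i| := by
  have hne0 : z 0 ≠ 0 := by intro e; rw [e] at h; simp at h
  have hne1 : z 1 ≠ 0 := by intro e; rw [e] at h; simp at h
  have hne2 : z 2 ≠ 0 := by intro e; rw [e] at h; simp at h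
  have hne3 : z 3 ≠ 0 := by intro e; rw [e] at h; simp at h
  unfold Cfun
  simp only [Complex.re_ofReal_mul, Complex.exp_ofReal_mul_I_re]
  set M := |z 0| + |z 1| + |z 2| + |z 3| - 2 * |z i| with hM
  set g : ℝ × ℝ × ℝ → ℝ := fun p =>
    |z 0 * Real.cos (p.1 + p.2.1 + p.2.2) + z 1 * Real.cos p.1 +
     z 2 * Real.cos p.2.1 + z 3 * Real.cos p.2.2| with hg
  -- upper bound pointwise
  have hub : ∀ p : ℝ × ℝ × ℝ, g p ≤ M := by
    intro p
    rw [hg, abs_le]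
    constructor
    · -- use ub for -z
      have hz' : (fun j => -z j) 0 * (fun j => -z j) 1 * (fun j => -z j) 2 *
          (fun j => -z j) 3 < 0 := by
        simp only
        rw [show (-z 0) * (-z 1) * (-z 2) * (-z 3) = z 0 * z 1 * z 2 * z 3 from by ring]
        exact h
      have hi' : ∑ j ∈ Finset.univ.erase i, (|(fun j => -z j) j|)⁻¹ ≤
          (|(fun j => -z j) i|)⁻¹ := by simpa [abs_neg] using hi
      have := ub (fun j => -z j) hz' i hi' p.1 p.2.1 p.2.2
      simp only [abs_neg] at this
      linarith
    · exact ub z h i hi p.1 p.2.1 p.2.2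
  have hbdd : BddAbove (Set.range g) := ⟨M, by rintro x ⟨p, rfl⟩; exact hub p⟩
  -- lower bound point
  set s0 := (if z 0 < 0 then (-1:ℝ) else 1) with hs0
  set s1 := (if z 1 < 0 then (-1:ℝ) else 1) with hs1
  set s2 := (if z 2 < 0 then (-1:ℝ) else 1) with hs2
  set s3 := (if z 3 < 0 then (-1:ℝ) else 1) with hs3
  set t0 := (if (0 : Fin 4) = i then (-1:ℝ) else 1) with ht0
  set t1 := (if (1 : Fin 4) = i then (-1:ℝ) else 1) with ht1
  set t2 := (if (2 : Fin 4) = i then (-1:ℝ) else 1) with ht2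
  set t3 := (if (3 : Fin 4) = i then (-1:ℝ) else 1) with ht3
  have hsp : s0 * s1 * s2 * s3 = -1 := signProd z h
  have htp : t0 * t1 * t2 * t3 = -1 := by
    have hi4 : i = 0 ∨ i = 1 ∨ i = 2 ∨ i = 3 := by fin_cases i <;> decide
    rw [ht0, ht1, ht2, ht3]
    rcases hi4 with rfl | rfl | rfl | rfl <;> simp (config := { decide := true }) <;> norm_num
  have hP : (s0*t0) * (s1*t1) * (s2*t2) * (s3*t3) = 1 := by
    rw [show (s0*t0) * (s1*t1) * (s2*t2) * (s3*t3) =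
      (s0*s1*s2*s3) * (t0*t1*t2*t3) from by ring, hsp, htp]; norm_num
  have hpm : ∀ (c : ℝ) (j : Fin 4), ((if c < 0 then (-1:ℝ) else 1) * (if j = i then (-1:ℝ) else 1) = 1) ∨
      ((if c < 0 then (-1:ℝ) else 1) * (if j = i then (-1:ℝ) else 1) = -1) := by
    intro c j
    by_cases hc : c < 0 <;> by_cases hj : j = i <;> simp [hc, hj]
  have h1 := hpm (z 1) 1
  have h2 := hpm (z 2) 2
  have h3 := hpm (z 3) 3
  rw [← hs1, ← ht1] at h1
  rw [← hs2, ← ht2] at h2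
  rw [← hs3, ← ht3] at h3
  have h0eq : s0 * t0 = (s1*t1) * (s2*t2) * (s3*t3) := by
    rcases h1 with h1 | h1 <;> rcases h2 with h2 | h2 <;> rcases h3 with h3 | h3 <;>
      rw [h1, h2, h3] at hP ⊢ <;> linarith
  -- the angles
  have hang : ∀ e : ℝ, e = 1 ∨ e = -1 →
      Real.cos (if e = 1 then (0:ℝ) else π) = e ∧
      Real.sin (if e = 1 then (0:ℝ) else π) = 0 := by
    rintro e (rfl | rfl) <;> norm_num [Real.cos_pi, Real.sin_pi]
  set A := (if s1*t1 = 1 then (0:ℝ) else π) with hA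
  set B := (if s2*t2 = 1 then (0:ℝ) else π) with hB
  set C := (if s3*t3 = 1 then (0:ℝ) else π) with hC
  obtain ⟨hcA, hsA⟩ := hang _ h1
  obtain ⟨hcB, hsB⟩ := hang _ h2
  obtain ⟨hcC, hsC⟩ := hang _ h3
  have hcAB : Real.cos (A + B) = (s1*t1) * (s2*t2) := by
    rw [Real.cos_add, hcA, hcB, hsA, hsB]; ring
  have hsAB : Real.sin (A + B) = 0 := by
    rw [Real.sin_add, hsA, hsB, hcA, hcB]; ring
  have hcABC : Real.cos (A + B + C) = (s1*t1) * (s2*t2) * (s3*t3) := by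
    rw [Real.cos_add, hcAB, hsAB, hcC, hsC]; ring
  -- the value
  have hv0 : z 0 * Real.cos (A + B + C) = |z 0| * t0 := by
    rw [hcABC, ← h0eq]
    rw [show z 0 * (s0 * t0) = (s0 * z 0) * t0 from by ring, hs0, sgn_mul _ hne0]
  have hv1 : z 1 * Real.cos A = |z 1| * t1 := by
    rw [hcA, show z 1 * (s1 * t1) = (s1 * z 1) * t1 from by ring, hs1, sgn_mul _ hne1]
  have hv2 : z 2 * Real.cos B = |z 2| * t2 := by
    rw [hcB, show z 2 * (s2 * t2) = (s2 * z 2) * t2 from by ring, hs2, sgn_mul _ hne2]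
  have hv3 : z 3 * Real.cos C = |z 3| * t3 := by
    rw [hcC, show z 3 * (s3 * t3) = (s3 * z 3) * t3 from by ring, hs3, sgn_mul _ hne3]
  have hval : g (A, B, C) = |M| := by
    rw [hg]
    simp only
    rw [hv0, hv1, hv2, hv3]
    congr 1
    rw [hM, ht0, ht1, ht2, ht3]
    have hi4 : i = 0 ∨ i = 1 ∨ i = 2 ∨ i = 3 := by fin_cases i <;> decide
    rcases hi4 with rfl | rfl | rfl | rfl <;> simp (config := { decide := true }) <;> ring
  exact le_antisymm (ciSup_le hub) (le_ciSup_of_le hbdd (A, B, C)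
    (by rw [hval]; exact le_abs_self M))

end
end
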